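/- arXiv:2012.02623 — 6 statements merged into one kernel-verified Lean document; each statement's English description precedes it below -/
import Mathlib

section
/- For integers 1 ≤ m ≤ n, the number of classical (m,n)-parking functions is (n-m+1)(n+1)^{m-1}. -/
/-- The first unoccupied spot `s` with `p ≤ s ≤ n`, if any. -/
def forwardSpot (n : ℕ) (occ : Finset ℕ) (p : ℕ) : Option ℕ :=
  (List.range' p (n + 1 - p)).find? (fun s => decide (s ∉ occ))

/-- Classical (forward-only) parking process: cars park one by one, each at the
first free spot `≥` its preference; returns the final occupied set if all park. -/
def classicalPark (n : ℕ) : List ℕ → Finset ℕ → Option (Finset ℕ)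
  | [], occ => some occ
  | p :: rest, occ =>
    match forwardSpot n occ p with
    | none => none
    | some s => classicalPark n rest (insert s occ)

/-- Backward candidates `p-1, p-2, …, p-k` that are at least `1`. -/
def backwardCandidates (k p : ℕ) : List ℕ :=
  ((List.range k).map (fun i => p - (i + 1))).filter (fun s => decide (1 ≤ s))

/-- The spot where a car with preference `p` parks under the `k`-Naples rule. -/
def naplesSpot (n k : ℕ) (occ : Finset ℕ) (p : ℕ) : Option ℕ :=
  if p ∈ occ then
    match (backwardCandidates k p).find? (fun s => decide (s ∉ occ)) with
    | some s => some s
    | none => forwardSpot n occ p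
  else some p

/-- `k`-Naples parking process; returns the final occupied set if all cars park. -/
def naplesPark (n k : ℕ) : List ℕ → Finset ℕ → Option (Finset ℕ)
  | [], occ => some occ
  | p :: rest, occ =>
    match naplesSpot n k occ p with
    | none => none
    | some s => naplesPark n k rest (insert s occ)

/-- All cars park under the `k`-Naples rule and no car with preference `p ≤ k`
finds all of `1, …, p` occupied (no car exits the lot searching backward). -/
def naplesContainedAux (n k : ℕ) : List ℕ → Finset ℕ → Bool
  | [], _ => true
  | p :: rest, occ =>
    (decide (p ≤ k → ¬ Finset.Icc 1 p ⊆ occ)) &&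
    match naplesSpot n k occ p with
    | none => false
    | some s => naplesContainedAux n k rest (insert s occ)

/-- The (1-based) preference list of `a : Fin m → Fin n`. -/
def prefList {m n : ℕ} (a : Fin m → Fin n) : List ℕ :=
  (List.ofFn a).map (fun x => (x : ℕ) + 1)

/-- The set of classical `(m,n)`-parking functions. -/
def PFset (m n : ℕ) : Finset (Fin m → Fin n) :=
  Finset.univ.filter (fun a => (classicalPark n (prefList a) ∅).isSome)

/-- The set of `k`-Naples `(m,n)`-parking functions. -/
def NPFset (m n k : ℕ) : Finset (Fin m → Fin n) :=
  Finset.univ.filter (fun a => (naplesPark n k (prefList a) ∅).isSome)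

/-- The set of contained `k`-Naples `(m,n)`-parking functions. -/
def Bset (m n k : ℕ) : Finset (Fin m → Fin n) :=
  Finset.univ.filter (fun a => naplesContainedAux n k (prefList a) ∅)

/-- The set of `k`-left obstructed `(m,n)`-parking functions: `m` cars on
`n + k` spots whose first `k` spots are obstructed, forward-only rule. -/
def LPFset (m n k : ℕ) : Finset (Fin m → Fin (n + k)) :=
  Finset.univ.filter (fun a => (classicalPark (n + k) (prefList a) (Finset.Icc 1 k)).isSome)
namespace PfCount

open Fin.NatCast Fin.CommRing

/-- circular search list starting at `p`. -/
def circList (n : ℕ) (p : Fin (n+1)) : List (Fin (n+1)) :=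
  (List.range (n+1)).map (fun i : ℕ => p + (i : Fin (n+1)))

def circSpot (n : ℕ) (occ : Finset (Fin (n+1))) (p : Fin (n+1)) : Fin (n+1) :=
  ((circList n p).find? (fun s => decide (s ∉ occ))).getD p

def circPark (n : ℕ) : List (Fin (n+1)) → Finset (Fin (n+1)) → Finset (Fin (n+1))
  | [], occ => occ
  | p :: rest, occ => circPark n rest (insert (circSpot n occ p) occ)

lemma mem_circList (n : ℕ) (p z : Fin (n+1)) : z ∈ circList n p := by
  refine List.mem_map.2 ⟨(z - p).val, List.mem_range.2 (z - p).isLt, ?_⟩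
  rw [Fin.cast_val_eq_self]
  simp

lemma find?_congr {α : Type*} (p q : α → Bool) :
    ∀ (l : List α), (∀ x ∈ l, p x = q x) → l.find? p = l.find? q
  | [], _ => rfl
  | a :: l, h => by
    have ha : p a = q a := h a (by simp)
    simp only [List.find?_cons, ha]
    cases q a with
    | true => rfl
    | false => exact find?_congr p q l (fun x hx => h x (by simp [hx]))

lemma circSpot_not_mem {n : ℕ} {occ : Finset (Fin (n+1))} (h : occ ≠ Finset.univ)
    (p : Fin (n+1)) : circSpot n occ p ∉ occ := by
  obtain ⟨z, hz⟩ : ∃ z, z ∉ occ := by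
    by_contra hc
    push_neg at hc
    exact h (Finset.eq_univ_of_forall hc)
  have hsome : ((circList n p).find? (fun s => decide (s ∉ occ))).isSome := by
    rw [List.find?_isSome]
    exact ⟨z, mem_circList n p z, by simpa using hz⟩
  obtain ⟨s, hs⟩ := Option.isSome_iff_exists.1 hsome
  have := List.find?_some hs
  simp only [circSpot, hs, Option.getD_some]
  simpa using this

lemma circSpot_of_not_mem {n : ℕ} {occ : Finset (Fin (n+1))} {p : Fin (n+1)}
    (h : p ∉ occ) : circSpot n occ p = p := by
  have : circList n p = p :: (List.range n).map (fun i => p + ((i+1 : ℕ) : Fin (n+1))) := by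
    simp only [circList, List.range_succ_eq_map, List.map_cons, List.map_map]
    simp [Function.comp_def]
  rw [circSpot, this, List.find?_cons]
  simp [h]

lemma subset_circPark (n : ℕ) : ∀ (l : List (Fin (n+1))) (occ : Finset (Fin (n+1))),
    occ ⊆ circPark n l occ
  | [], occ => by rw [circPark]
  | p :: rest, occ =>
    (Finset.subset_insert _ _).trans (subset_circPark n rest _)

lemma card_circPark (n : ℕ) : ∀ (l : List (Fin (n+1))) (occ : Finset (Fin (n+1))),
    occ.card + l.length ≤ n + 1 → (circPark n l occ).card = occ.card + l.length
  | [], occ, _ => by simp [circPark]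
  | p :: rest, occ, h => by
    have hne : occ ≠ Finset.univ := by
      intro he
      have hcu : occ.card = n + 1 := by rw [he]; simp
      simp only [List.length_cons] at h
      omega
    have hnm := circSpot_not_mem hne p
    have := card_circPark n rest (insert (circSpot n occ p) occ)
      (by rw [Finset.card_insert_of_notMem hnm]; simpa [Nat.add_assoc, Nat.add_comm 1] using h)
    rw [circPark, this, Finset.card_insert_of_notMem hnm]
    simp [List.length_cons]
    omega

lemma zero_mem_circPark_of_mem (n : ℕ) :
    ∀ (l : List (Fin (n+1))) (occ : Finset (Fin (n+1))),
    (0 : Fin (n+1)) ∈ occ ∨ (0 : Fin (n+1)) ∈ l → 0 ∈ circPark n l occ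
  | [], occ, h => by
    rcases h with h | h
    · exact h
    · simp at h
  | p :: rest, occ, h => by
    rw [circPark]
    rcases h with h | h
    · exact zero_mem_circPark_of_mem n rest _ (Or.inl (Finset.mem_insert_of_mem h))
    · rcases List.mem_cons.1 h with h | h
      · subst h
        by_cases h0 : (0 : Fin (n+1)) ∈ occ
        · exact zero_mem_circPark_of_mem n rest _ (Or.inl (Finset.mem_insert_of_mem h0))
        · rw [circSpot_of_not_mem h0]
          exact zero_mem_circPark_of_mem n rest _ (Or.inl (Finset.mem_insert_self _ _))
      · exact zero_mem_circPark_of_mem n rest _ (Or.inr h)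

/-- equivariance -/
lemma circSpot_add {n : ℕ} (occ : Finset (Fin (n+1))) (p r : Fin (n+1)) :
    circSpot n (occ.image (· + r)) (p + r) = circSpot n occ p + r := by
  have hlist : circList n (p + r) = (circList n p).map (· + r) := by
    simp only [circList, List.map_map]
    apply List.map_congr_left
    intro i _
    simp [Function.comp]
    ring
  have hpred : ∀ x : Fin (n+1),
      (decide (x + r ∉ occ.image (· + r))) = decide (x ∉ occ) := by
    intro x
    apply decide_eq_decide.2
    constructor
    · intro hx hm
      exact hx (Finset.mem_image_of_mem _ hm)
    · intro hx hm
      obtain ⟨y, hy, hxy⟩ := Finset.mem_image.1 hm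
      exact hx (by rwa [add_right_cancel hxy] at hy)
  rw [circSpot, hlist, List.find?_map]
  have : (fun s => decide (s ∉ occ.image (· + r))) ∘ (· + r)
      = fun x => decide (x ∉ occ) := by
    funext x
    exact hpred x
  rw [this, circSpot]
  cases (circList n p).find? (fun x => decide (x ∉ occ)) <;> simp

lemma circPark_add {n : ℕ} (r : Fin (n+1)) :
    ∀ (l : List (Fin (n+1))) (occ : Finset (Fin (n+1))),
    circPark n (l.map (· + r)) (occ.image (· + r)) = (circPark n l occ).image (· + r)
  | [], occ => rfl
  | p :: rest, occ => by
    have h1 : insert (circSpot n occ p + r) (occ.image (· + r))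
        = (insert (circSpot n occ p) occ).image (· + r) := (Finset.image_insert _ _ _).symm
    conv_rhs => rw [circPark]
    rw [List.map_cons, circPark, circSpot_add, h1, circPark_add r rest]

/-! Bridge between linear and circular parking. -/

lemma flatMap_sing {α β : Type*} (f : α → β) : ∀ l : List α, (l.flatMap fun a => [f a]) = l.map f
  | [] => rfl
  | a :: l => by simp [List.flatMap_cons, flatMap_sing f l]

lemma prefList_eq {m n : ℕ} (a : Fin m → Fin n) :
    prefList a = List.ofFn (fun i => ((a i : ℕ) + 1)) := by
  simp only [prefList, List.pure_def, List.bind_eq_flatMap, flatMap_sing, List.map_map,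
    List.map_ofFn]
  rfl

def e (n : ℕ) : ℕ → Fin (n+1) := fun t => (t : Fin (n+1))

lemma e_val {n t : ℕ} (h : t ≤ n) : ((e n t) : ℕ) = t := by
  simp [e, Fin.val_natCast]
  omega

lemma e_inj {n a b : ℕ} (ha : a ≤ n) (hb : b ≤ n) (h : e n a = e n b) : a = b := by
  have := congrArg Fin.val h
  rwa [e_val ha, e_val hb] at this

lemma circList_e {n p : ℕ} (hp : p ≤ n) :
    circList n (e n p) = (List.range' p (n+1-p) ++ List.range p).map (e n) := by
  have h1 : (List.range (n+1)) = List.range (n+1-p) ++ (List.range p).map ((n+1-p) + ·) := by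
    have := List.range_add (n := n+1-p) (m := p)
    rw [← this]
    congr 1
    omega
  simp only [circList, h1, List.map_append, List.map_map, List.range'_eq_map_range]
  congr 1
  · apply List.map_congr_left
    intro i hi
    simp only [Function.comp]
    show e n p + (i : Fin (n+1)) = e n (p + i)
    simp [e]
  · apply List.map_congr_left
    intro i hi
    simp only [Function.comp]
    show e n p + (((n+1-p) + i : ℕ) : Fin (n+1)) = e n i
    have : ((p : Fin (n+1)) + ((n+1-p) + i : ℕ)) = ((p + (n+1-p) + i : ℕ) : Fin (n+1)) := by
      push_cast
      ring
    rw [e, this]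
    have hpe : p + (n+1-p) + i = (n+1) + i := by omega
    rw [hpe]
    simp [e, Nat.add_mod, Fin.ext_iff, Fin.val_natCast]

lemma mem_image_e {n : ℕ} {occ : Finset ℕ} (hocc : occ ⊆ Finset.Icc 1 n)
    {t : ℕ} (ht : t ≤ n) : e n t ∈ occ.image (e n) ↔ t ∈ occ := by
  constructor
  · intro h
    obtain ⟨y, hy, hye⟩ := Finset.mem_image.1 h
    have := Finset.mem_Icc.1 (hocc hy)
    rwa [e_inj this.2 ht hye] at hy
  · exact fun h => Finset.mem_image_of_mem _ h

lemma zero_not_mem_image_e {n : ℕ} {occ : Finset ℕ} (hocc : occ ⊆ Finset.Icc 1 n) :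
    (0 : Fin (n+1)) ∉ occ.image (e n) := by
  intro h
  obtain ⟨y, hy, hye⟩ := Finset.mem_image.1 h
  have hy' := Finset.mem_Icc.1 (hocc hy)
  have := congrArg Fin.val hye
  rw [e_val hy'.2] at this
  simp at this
  omega

lemma find?_bridge {n p : ℕ} {occ : Finset ℕ} (hpn : p ≤ n)
    (hocc : occ ⊆ Finset.Icc 1 n) :
    (circList n (e n p)).find? (fun x => decide (x ∉ occ.image (e n)))
      = ((List.range' p (n+1-p) ++ List.range p).find?
          (fun t => decide (t ∉ occ))).map (e n) := by
  rw [circList_e hpn, List.find?_map]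
  congr 1
  apply find?_congr
  intro t ht
  have htn : t ≤ n := by
    rcases List.mem_append.1 ht with h | h
    · have := List.mem_range'_1.1 h
      omega
    · have := List.mem_range.1 h
      omega
  simp only [Function.comp]
  exact decide_eq_decide.2 (not_congr (mem_image_e hocc htn))

lemma circSpot_some_bridge {n p s : ℕ} {occ : Finset ℕ} (hpn : p ≤ n)
    (hocc : occ ⊆ Finset.Icc 1 n) (hs : forwardSpot n occ p = some s) :
    circSpot n (occ.image (e n)) (e n p) = e n s := by
  rw [forwardSpot] at hs
  rw [circSpot, find?_bridge hpn hocc, List.find?_append, hs]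
  rfl

lemma circSpot_none_bridge {n p : ℕ} {occ : Finset ℕ} (hp1 : 1 ≤ p) (hpn : p ≤ n)
    (hocc : occ ⊆ Finset.Icc 1 n) (hs : forwardSpot n occ p = none) :
    circSpot n (occ.image (e n)) (e n p) = 0 := by
  rw [forwardSpot] at hs
  obtain ⟨q, rfl⟩ : ∃ q, p = q + 1 := ⟨p - 1, by omega⟩
  have h0 : (0 : ℕ) ∉ occ := by
    intro h
    have := Finset.mem_Icc.1 (hocc h)
    omega
  rw [circSpot, find?_bridge hpn hocc, List.find?_append, hs, List.range_succ_eq_map,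
    List.find?_cons]
  simp [h0]
  rfl

lemma bridge (n : ℕ) : ∀ (l : List ℕ) (occ : Finset ℕ),
    (∀ x ∈ l, x ∈ Finset.Icc 1 n) → occ ⊆ Finset.Icc 1 n →
    ((classicalPark n l occ).isSome ↔
      (0 : Fin (n+1)) ∉ circPark n (l.map (e n)) (occ.image (e n)))
  | [], occ, _, hocc => by
    simp only [classicalPark, List.map_nil, circPark, Option.isSome_some]
    simpa using zero_not_mem_image_e hocc
  | p :: rest, occ, hl, hocc => by
    have hp := Finset.mem_Icc.1 (hl p (by simp))
    cases hfs : forwardSpot n occ p with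
    | none =>
      have h0 : circSpot n (occ.image (e n)) (e n p) = 0 :=
        circSpot_none_bridge hp.1 hp.2 hocc hfs
      simp only [classicalPark, hfs, List.map_cons, circPark, h0]
      refine iff_of_false (by simp) (fun hc => hc ?_)
      exact zero_mem_circPark_of_mem n _ _ (Or.inl (Finset.mem_insert_self _ _))
    | some s =>
      have hs' := List.mem_of_find?_eq_some hfs
      have hsr := List.mem_range'_1.1 hs'
      have hs1 : 1 ≤ s := le_trans hp.1 hsr.1
      have hsn : s ≤ n := by omega
      have heq : circSpot n (occ.image (e n)) (e n p) = e n s :=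
        circSpot_some_bridge hp.2 hocc hfs
      have him : insert (e n s) (occ.image (e n)) = (insert s occ).image (e n) :=
        (Finset.image_insert _ _ _).symm
      simp only [classicalPark, hfs, List.map_cons, circPark, heq, him]
      exact bridge n rest (insert s occ)
        (fun x hx => hl x (by simp [hx]))
        (Finset.insert_subset (Finset.mem_Icc.2 ⟨hs1, hsn⟩) hocc)

/-! Counting. -/

def circOcc (n : ℕ) {m : ℕ} (b : Fin m → Fin (n+1)) : Finset (Fin (n+1)) :=
  circPark n (List.ofFn b) ∅

lemma card_circOcc {n m : ℕ} (h : m ≤ n + 1) (b : Fin m → Fin (n+1)) :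
    (circOcc n b).card = m := by
  have := card_circPark n (List.ofFn b) ∅ (by simpa using h)
  simpa [circOcc] using this

lemma circOcc_add {n m : ℕ} (b : Fin m → Fin (n+1)) (r : Fin (n+1)) :
    circOcc n (fun i => b i + r) = (circOcc n b).image (· + r) := by
  have h1 : List.ofFn (fun i => b i + r) = (List.ofFn b).map (· + r) := by
    rw [List.map_ofFn]
    rfl
  have h2 := circPark_add (n := n) r (List.ofFn b) ∅
  simp only [Finset.image_empty] at h2
  rw [circOcc, h1, h2]
  rfl

def Aset (m n : ℕ) (r : Fin (n+1)) : Finset (Fin m → Fin (n+1)) :=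
  Finset.univ.filter (fun b => r ∉ circOcc n b)

lemma card_Aset_eq (m n : ℕ) (r : Fin (n+1)) : (Aset m n r).card = (Aset m n 0).card := by
  apply Finset.card_bij (fun b _ => fun i => b i - r)
  · intro b hb
    simp only [Aset, Finset.mem_filter, Finset.mem_univ, true_and] at hb ⊢
    intro hc
    apply hb
    have : r ∈ (circOcc n (fun i => b i - r)).image (· + r) := by
      refine Finset.mem_image.2 ⟨0, hc, by simp⟩
    rw [← circOcc_add] at this
    have hbb : (fun i => b i - r + r) = b := by
      funext i
      simp
    rwa [hbb] at this
  · intro b hb c hc h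
    funext i
    have := congrFun h i
    simpa using congrArg (· + r) this
  · intro b hb
    refine ⟨fun i => b i + r, ?_, by funext i; simp⟩
    simp only [Aset, Finset.mem_filter, Finset.mem_univ, true_and] at hb ⊢
    intro hc
    apply hb
    rw [circOcc_add] at hc
    obtain ⟨y, hy, hyr⟩ := Finset.mem_image.1 hc
    have : y = 0 := by
      have : y + r = 0 + r := by simpa using hyr
      exact add_right_cancel this
    rwa [this] at hy

lemma card_Aset_zero (m n : ℕ) (hm : 1 ≤ m) (hmn : m ≤ n) :
    (Aset m n 0).card = (n + 1 - m) * (n + 1) ^ (m - 1) := by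
  have hsum : ∑ r : Fin (n+1), (Aset m n r).card = (n + 1 - m) * (n + 1) ^ m := by
    have hA : ∀ r : Fin (n+1), (Aset m n r).card
        = ∑ b : Fin m → Fin (n+1), if r ∉ circOcc n b then 1 else 0 :=
      fun r => Finset.card_filter _ _
    calc ∑ r : Fin (n+1), (Aset m n r).card
        = ∑ r : Fin (n+1), ∑ b : Fin m → Fin (n+1), if r ∉ circOcc n b then 1 else 0 := by
          exact Finset.sum_congr rfl fun r _ => hA r
      _ = ∑ b : Fin m → Fin (n+1), ∑ r : Fin (n+1), if r ∉ circOcc n b then 1 else 0 :=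
          Finset.sum_comm
      _ = ∑ _b : Fin m → Fin (n+1), (n + 1 - m) := by
          refine Finset.sum_congr rfl fun b _ => ?_
          have h1 : (∑ r : Fin (n+1), if r ∉ circOcc n b then 1 else 0)
              = ((circOcc n b)ᶜ).card := by
            have hc : (circOcc n b)ᶜ = Finset.univ.filter (fun r => r ∉ circOcc n b) := by
              ext r
              simp
            rw [hc, Finset.card_filter]
          rw [h1, Finset.card_compl, card_circOcc (by omega) b, Fintype.card_fin]
      _ = (n + 1 - m) * (n + 1) ^ m := by
          rw [Finset.sum_const, Finset.card_univ, smul_eq_mul]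
          rw [Fintype.card_fun, Fintype.card_fin, Fintype.card_fin, mul_comm]
  have hconst : ∑ r : Fin (n+1), (Aset m n r).card = (n + 1) * (Aset m n 0).card := by
    rw [Finset.sum_congr rfl fun r _ => card_Aset_eq m n r, Finset.sum_const,
      Finset.card_univ, Fintype.card_fin, smul_eq_mul]
  have hpow : (n + 1) ^ m = (n + 1) * (n + 1) ^ (m - 1) := by
    conv_lhs => rw [show m = 1 + (m - 1) by omega]
    rw [pow_add, pow_one]
  have key : (n + 1) * (Aset m n 0).card
      = (n + 1) * ((n + 1 - m) * (n + 1) ^ (m - 1)) := by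
    rw [← hconst, hsum, hpow]
    ring
  exact Nat.eq_of_mul_eq_mul_left (by omega) key

lemma prefList_map_e {m n : ℕ} (a : Fin m → Fin n) :
    (prefList a).map (e n) = List.ofFn (fun i => Fin.succ (a i)) := by
  rw [prefList_eq, List.map_ofFn]
  congr 1
  funext i
  apply Fin.ext
  have hlt := (a i).isLt
  have : ((a i : ℕ) + 1) % (n + 1) = (a i : ℕ) + 1 := Nat.mod_eq_of_lt (by omega)
  simp [Function.comp, e, Fin.val_natCast, this, Fin.val_succ]

lemma mem_PF_iff {m n : ℕ} (a : Fin m → Fin n) :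
    a ∈ PFset m n ↔ (0 : Fin (n+1)) ∉ circOcc n (fun i => Fin.succ (a i)) := by
  rw [PFset, Finset.mem_filter]
  have hl : ∀ x ∈ prefList a, x ∈ Finset.Icc 1 n := by
    intro x hx
    rw [prefList_eq] at hx
    obtain ⟨i, rfl⟩ := List.mem_ofFn.1 hx
    have := (a i).isLt
    simp only [Finset.mem_Icc]
    omega
  have hb := bridge n (prefList a) ∅ hl (by simp)
  simp only [Finset.image_empty] at hb
  rw [prefList_map_e] at hb
  rw [circOcc]
  simp [hb]

end PfCount

theorem pf_count (m n : ℕ) (hm : 1 ≤ m) (hmn : m ≤ n) :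
    (PFset m n).card = (n - m + 1) * (n + 1) ^ (m - 1) := by
  have hbij : (PFset m n).card = (PfCount.Aset m n 0).card := by
    apply Finset.card_bij (fun a _ => fun i => Fin.succ (a i))
    · intro a ha
      simp only [PfCount.Aset, Finset.mem_filter, Finset.mem_univ, true_and]
      exact (PfCount.mem_PF_iff a).1 ha
    · intro a _ c _ h
      funext i
      exact Fin.succ_injective n (congrFun h i)
    · intro b hb
      simp only [PfCount.Aset, Finset.mem_filter, Finset.mem_univ, true_and] at hb
      have hne : ∀ i, b i ≠ 0 := by
        intro i hi
        apply hb
        apply PfCount.zero_mem_circPark_of_mem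
        refine Or.inr ?_
        exact List.mem_ofFn.2 ⟨i, hi⟩
      refine ⟨fun i => (b i).pred (hne i), ?_, ?_⟩
      · rw [PfCount.mem_PF_iff]
        have hbb : (fun i => Fin.succ ((b i).pred (hne i))) = b := by
          funext i
          exact Fin.succ_pred _ _
        rwa [hbb]
      · funext i
        exact Fin.succ_pred _ _
  rw [hbij, PfCount.card_Aset_zero m n hm hmn]
  congr 1
  omega
end

section
/- For all n ≥ 1, the number of classical (n,n)-parking functions is (n+1)^{n-1}. -/
lemma find?_range'_some {P : ℕ → Bool} {p k s : ℕ}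
    (h : (List.range' p k).find? P = some s) :
    p ≤ s ∧ s < p + k ∧ P s = true ∧ ∀ t, p ≤ t → t < s → P t = false := by
  induction k generalizing p with
  | zero => simp at h
  | succ k ih =>
    rw [List.range'_succ, List.find?_cons] at h
    by_cases hp : P p
    · rw [hp] at h
      simp only [Option.some.injEq] at h
      subst h
      exact ⟨le_refl _, by omega, hp, fun t h1 h2 => by omega⟩
    · rw [Bool.eq_false_iff.mpr hp] at h
      obtain ⟨h1, h2, h3, h4⟩ := ih h
      refine ⟨by omega, by omega, h3, fun t ht1 ht2 => ?_⟩
      rcases eq_or_lt_of_le ht1 with rfl | h'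
      · exact Bool.eq_false_iff.mpr hp
      · exact h4 t h' ht2

lemma find?_range'_none {P : ℕ → Bool} {p k : ℕ}
    (h : (List.range' p k).find? P = none) :
    ∀ t, p ≤ t → t < p + k → P t = false := by
  rw [List.find?_eq_none] at h
  intro t h1 h2
  exact Bool.eq_false_iff.mpr (h t (by rw [List.mem_range']; exact ⟨t - p, by omega, by omega⟩))

lemma fs_some {n : ℕ} {occ : Finset ℕ} {p s : ℕ} (h : forwardSpot n occ p = some s) :
    p ≤ s ∧ s ≤ n ∧ s ∉ occ ∧ ∀ t, p ≤ t → t < s → t ∈ occ := by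
  obtain ⟨h1, h2, h3, h4⟩ := find?_range'_some h
  have hpn : p ≤ n := by
    by_contra hc
    have : n + 1 - p = 0 := by omega
    omega
  refine ⟨h1, by omega, by simpa using h3, fun t ht1 ht2 => by simpa using h4 t ht1 ht2⟩

lemma fs_none {n : ℕ} {occ : Finset ℕ} {p : ℕ} (h : forwardSpot n occ p = none) :
    ∀ t, p ≤ t → t ≤ n → t ∈ occ := by
  intro t h1 h2
  simpa using find?_range'_none h t h1 (by omega)

def parkCond (n : ℕ) (l : List ℕ) (occ : Finset ℕ) : Prop :=
  ∀ i, 1 ≤ i → i ≤ n →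
    l.countP (fun p => decide (i ≤ p)) + (occ.filter (fun s => i ≤ s)).card + i ≤ n + 1


theorem park_iff (n : ℕ) (l : List ℕ) (occ : Finset ℕ)
    (hocc : ∀ s ∈ occ, 1 ≤ s ∧ s ≤ n) (hl : ∀ p ∈ l, 1 ≤ p ∧ p ≤ n) :
    (classicalPark n l occ).isSome = true ↔ parkCond n l occ := by
  induction l generalizing occ with
  | nil =>
    simp only [classicalPark, Option.isSome_some]
    constructor
    · intro _ i hi1 hi2
      have hsub : occ.filter (fun s => i ≤ s) ⊆ Finset.Icc i n := by
        intro s hs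
        rw [Finset.mem_filter] at hs
        exact Finset.mem_Icc.mpr ⟨hs.2, (hocc s hs.1).2⟩
      have := Finset.card_le_card hsub
      rw [Nat.card_Icc] at this
      simp only [List.countP_nil]
      omega
    · intro _; trivial
  | cons p rest ih =>
    obtain ⟨hp1, hp2⟩ := hl p List.mem_cons_self
    have hlr : ∀ q ∈ rest, 1 ≤ q ∧ q ≤ n := fun q hq => hl q (List.mem_cons_of_mem p hq)
    simp only [classicalPark]
    cases h : forwardSpot n occ p with
    | none =>
      simp only [Option.isSome_none, Bool.false_eq_true, false_iff]
      intro hc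
      have hcp := hc p hp1 hp2
      have hsub : Finset.Icc p n ⊆ occ.filter (fun x => p ≤ x) := by
        intro x hx
        rw [Finset.mem_Icc] at hx
        rw [Finset.mem_filter]
        exact ⟨fs_none h x hx.1 hx.2, hx.1⟩
      have hcard := Finset.card_le_card hsub
      rw [Nat.card_Icc] at hcard
      rw [List.countP_cons] at hcp
      simp at hcp
      omega
    | some s =>
      obtain ⟨hps, hsn, hso, hfirst⟩ := fs_some h
      have hocc' : ∀ x ∈ insert s occ, 1 ≤ x ∧ x ≤ n := by
        intro x hx
        rcases Finset.mem_insert.mp hx with rfl | hx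
        · exact ⟨by omega, hsn⟩
        · exact hocc x hx
      rw [ih (insert s occ) hocc' hlr]
      have hcard : ∀ i : ℕ, ((insert s occ).filter (fun x => i ≤ x)).card
          = (occ.filter (fun x => i ≤ x)).card + (if i ≤ s then 1 else 0) := by
        intro i
        rw [Finset.filter_insert]
        split
        · rw [Finset.card_insert_of_notMem (by simp [hso])]
        · simp
      constructor
      · -- new → old (easy)
        intro hc i hi1 hin
        have hci := hc i hi1 hin
        rw [hcard i] at hci
        rw [List.countP_cons]
        by_cases hip : i ≤ p
        · have his : i ≤ s := le_trans hip hps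
          rw [if_pos his] at hci
          simp [hip]
          omega
        · simp [hip]
          split at hci <;> omega
      · -- old → new (hard)
        intro hc i hi1 hin
        have hci := hc i hi1 hin
        rw [List.countP_cons] at hci
        rw [hcard i]
        by_cases hip : i ≤ p
        · rw [if_pos (le_trans hip hps)]
          simp [hip] at hci
          omega
        · simp [hip] at hci
          by_cases his : i ≤ s
          · rw [if_pos his]
            have hcp := hc p hp1 hp2
            rw [List.countP_cons] at hcp
            simp at hcp
            have hmono : rest.countP (fun q => decide (i ≤ q))
                ≤ rest.countP (fun q => decide (p ≤ q)) := by
              apply List.countP_mono_left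
              intro q _ hq
              simp only [decide_eq_true_eq] at *
              omega
            have hsub : occ.filter (fun x => i ≤ x) ∪ Finset.Icc p (i-1)
                ⊆ occ.filter (fun x => p ≤ x) := by
              intro x hx
              rcases Finset.mem_union.mp hx with hx | hx
              · rw [Finset.mem_filter] at *
                exact ⟨hx.1, by omega⟩
              · rw [Finset.mem_Icc] at hx
                rw [Finset.mem_filter]
                exact ⟨hfirst x hx.1 (by omega), hx.1⟩
            have hdisj : Disjoint (occ.filter (fun x => i ≤ x)) (Finset.Icc p (i-1)) := by
              rw [Finset.disjoint_left]
              intro x hx hx2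
              rw [Finset.mem_filter] at hx
              rw [Finset.mem_Icc] at hx2
              omega
            have hcard2 := Finset.card_le_card hsub
            rw [Finset.card_union_of_disjoint hdisj, Nat.card_Icc] at hcard2
            omega
          · rw [if_neg his]
            omega

theorem countP_ofFn {α : Type*} (n : ℕ) (a : Fin n → α) (P : α → Bool) :
    (List.ofFn a).countP P = (Finset.univ.filter (fun j => P (a j))).card := by
  induction n with
  | zero => simp
  | succ m ih =>
    rw [List.ofFn_succ, List.countP_cons, ih (fun i => a i.succ)]
    rw [Finset.card_filter, Finset.card_filter, Fin.sum_univ_succ]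
    omega

theorem prefList_eq {m n : ℕ} (a : Fin m → Fin n) :
    prefList a = List.ofFn (fun j => (a j : ℕ) + 1) := by
  simp only [prefList, bind_pure_comp, List.map_eq_map, List.map_map, List.map_ofFn]
  rfl

theorem prefList_key {n : ℕ} (a : Fin n → Fin n) (t : ℕ) :
    (prefList a).countP (fun p => decide (t + 1 ≤ p))
      + (Finset.univ.filter (fun j => (a j : ℕ) < t)).card = n := by
  rw [prefList_eq, countP_ofFn]
  have e1 : (Finset.univ.filter
      (fun j => decide (t + 1 ≤ (fun j => (a j : ℕ) + 1) j)))
      = (Finset.univ.filter (fun j => ¬((a j : ℕ) < t))) := by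
    apply Finset.filter_congr
    intro j _
    simp only [Function.comp, decide_eq_true_eq]
    constructor
    · intro h; simp; omega
    · intro h; simp at h ⊢; omega
  rw [e1, add_comm]
  have := Finset.card_filter_add_card_filter_not
    (s := (Finset.univ : Finset (Fin n))) (p := fun j => (a j : ℕ) < t)
  simpa using this

theorem pf_cond_iff {n : ℕ} (a : Fin n → Fin n) :
    parkCond n (prefList a) ∅ ↔
      ∀ t, t ≤ n → t ≤ (Finset.univ.filter (fun j => (a j : ℕ) < t)).card := by
  constructor
  · intro hc t ht
    rcases Nat.lt_or_ge t n with h | h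
    · have := hc (t + 1) (by omega) (by omega)
      have key := prefList_key a t
      simp only [Finset.filter_empty, Finset.card_empty] at this
      omega
    · have htn : t = n := by omega
      have : (Finset.univ.filter (fun j => (a j : ℕ) < t)) = Finset.univ := by
        apply Finset.filter_true_of_mem
        intro j _
        rw [htn]
        exact (a j).isLt
      rw [this, Finset.card_univ, Fintype.card_fin]
      omega
  · intro hc i hi1 hin
    have := hc (i - 1) (by omega)
    have key := prefList_key a (i - 1)
    have hi : i - 1 + 1 = i := by omega
    rw [hi] at key
    simp only [Finset.filter_empty, Finset.card_empty]
    omega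

def Qf {n : ℕ} (f : Fin n → ZMod (n+1)) (t : ℕ) : ℕ :=
  (Finset.univ.filter (fun j => (f j).val < t)).card

def GoodZ {n : ℕ} (f : Fin n → ZMod (n+1)) : Prop := ∀ t ≤ n, t ≤ Qf f t

def FirstMin {n : ℕ} (f : Fin n → ZMod (n+1)) (a : ℕ) : Prop :=
  (∀ m, a ≤ m → m ≤ n → Qf f a + m ≤ Qf f m + a) ∧ (∀ m, m < a → Qf f a + m < Qf f m + a)

lemma Qf_le {n : ℕ} (f : Fin n → ZMod (n+1)) (t : ℕ) : Qf f t ≤ n := by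
  calc Qf f t ≤ Finset.univ.card := Finset.card_le_card (Finset.filter_subset _ _)
  _ = n := by simp

lemma Qf_zero {n : ℕ} (f : Fin n → ZMod (n+1)) : Qf f 0 = 0 := by
  simp [Qf]

lemma Qf_large {n : ℕ} (f : Fin n → ZMod (n+1)) {m : ℕ} (h : n + 1 ≤ m) : Qf f m = n := by
  unfold Qf
  rw [Finset.filter_true_of_mem (fun j _ => lt_of_lt_of_le (ZMod.val_lt (f j)) h)]
  simp

lemma val_shift {n : ℕ} (x : ZMod (n+1)) {a : ℕ} (ha : a ≤ n) :
    (x - (a : ZMod (n+1))).val = if a ≤ x.val then x.val - a else x.val + (n+1) - a := by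
  have hval : ((x - (a : ZMod (n+1))) + (a : ZMod (n+1))).val = x.val := by
    rw [sub_add_cancel]
  have hamod : a % (n+1) = a := Nat.mod_eq_of_lt (by omega)
  rw [ZMod.val_add, ZMod.val_natCast, hamod] at hval
  have hw : (x - (a : ZMod (n+1))).val < n + 1 := ZMod.val_lt _
  have hx : x.val < n + 1 := ZMod.val_lt x
  set w := (x - (a : ZMod (n+1))).val with hwdef
  rcases Nat.lt_or_ge (w + a) (n+1) with h | h
  · rw [Nat.mod_eq_of_lt h] at hval
    split <;> omega
  · rw [Nat.mod_eq_sub_mod h, Nat.mod_eq_of_lt (by omega)] at hval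
    split <;> omega

lemma count_shift {n : ℕ} (f : Fin n → ZMod (n+1)) {a t : ℕ} (ha : a ≤ n) (ht : t ≤ n) :
    Qf (fun j => f j - (a : ZMod (n+1))) t + Qf f a = Qf f (a + t) + Qf f (a + t - (n+1)) := by
  unfold Qf
  rw [Finset.card_filter, Finset.card_filter, Finset.card_filter, Finset.card_filter,
    ← Finset.sum_add_distrib, ← Finset.sum_add_distrib]
  apply Finset.sum_congr rfl
  intro j _
  rw [val_shift (f j) ha]
  have hx : (f j).val < n + 1 := ZMod.val_lt _
  split_ifs <;> omega

lemma good_shift_iff {n : ℕ} (f : Fin n → ZMod (n+1)) {a : ℕ} (ha : a ≤ n) :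
    GoodZ (fun j => f j - (a : ZMod (n+1))) ↔ FirstMin f a := by
  constructor
  · intro h
    constructor
    · intro m ham hmn
      have h1 := h (m - a) (by omega)
      have h2 := count_shift f (t := m - a) ha (by omega)
      rw [show a + (m - a) = m by omega] at h2
      rw [show m - (n+1) = 0 by omega, Qf_zero] at h2
      omega
    · intro m hma
      have h1 := h (m + (n+1) - a) (by omega)
      have h2 := count_shift f (t := m + (n+1) - a) ha (by omega)
      rw [show a + (m + (n+1) - a) = m + (n+1) by omega] at h2
      rw [Qf_large f (m := m + (n+1)) (by omega), show m + (n+1) - (n+1) = m by omega] at h2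
      omega
  · intro h t ht
    rcases Nat.lt_or_ge (a + t) (n + 1) with hat | hat
    · have h1 := h.1 (a + t) (by omega) (by omega)
      have h2 := count_shift f (t := t) ha ht
      rw [show a + t - (n+1) = 0 by omega, Qf_zero] at h2
      omega
    · have hma : a + t - (n+1) < a := by omega
      have h1 := h.2 (a + t - (n+1)) hma
      have h2 := count_shift f (t := t) ha ht
      rw [Qf_large f hat] at h2
      have h3 := Qf_le f a
      omega

lemma exists_unique_firstmin {n : ℕ} (f : Fin n → ZMod (n+1)) :
    ∃! a, a ≤ n ∧ FirstMin f a := by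
  set g : ℕ → ℤ := fun m => (Qf f m : ℤ) - m with hg
  set S : Finset ℕ := Finset.range (n+1) with hS
  obtain ⟨x, hxS, hxmin⟩ := Finset.exists_min_image S g ⟨0, by simp [hS]⟩
  set T : Finset ℕ := S.filter (fun m => ∀ m' ∈ S, g m ≤ g m') with hT
  have hTne : T.Nonempty := ⟨x, by rw [hT, Finset.mem_filter]; exact ⟨hxS, hxmin⟩⟩
  set a := T.min' hTne with hadef
  have haT : a ∈ T := Finset.min'_mem T hTne
  rw [hT, Finset.mem_filter, hS, Finset.mem_range] at haT
  have han : a ≤ n := by omega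
  have hamin : ∀ m' ∈ S, g a ≤ g m' := haT.2
  have haFM : FirstMin f a := by
    constructor
    · intro m ham hmn
      have := hamin m (by rw [hS, Finset.mem_range]; omega)
      rw [hg] at this
      simp only at this
      omega
    · intro m hma
      have hmS : m ∈ S := by rw [hS, Finset.mem_range]; omega
      have h1 := hamin m hmS
      rcases lt_or_eq_of_le h1 with h2 | h2
      · rw [hg] at h2; simp only at h2; omega
      · exfalso
        have hmT : m ∈ T := by
          rw [hT, Finset.mem_filter]
          exact ⟨hmS, fun m' hm' => h2 ▸ hamin m' hm'⟩
        have := Finset.min'_le T m hmT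
        omega
  refine ⟨a, ⟨han, haFM⟩, ?_⟩
  rintro b ⟨hbn, hb1, hb2⟩
  by_contra hne
  rcases lt_or_gt_of_ne hne with h | h
  · have c1 := haFM.2 b h
    have c2 := hb1 a (by omega) han
    omega
  · have c1 := hb2 a h
    have c2 := haFM.1 b (by omega) hbn
    omega

lemma exists_unique_shift {n : ℕ} (f : Fin n → ZMod (n+1)) :
    ∃! c : ZMod (n+1), GoodZ (fun j => f j + c) := by
  obtain ⟨a, ⟨han, haFM⟩, huniq⟩ := exists_unique_firstmin f
  refine ⟨-(a : ZMod (n+1)), ?_, ?_⟩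
  · show GoodZ (fun j => f j + -(a : ZMod (n+1)))
    have he : (fun j => f j + -(a : ZMod (n+1))) = (fun j => f j - (a : ZMod (n+1))) := by
      funext j; rw [sub_eq_add_neg]
    rw [he]
    exact (good_shift_iff f han).mpr haFM
  · intro c hc
    set a' := (-c).val with ha'
    have ha'n : a' ≤ n := by have := ZMod.val_lt (-c); omega
    have hc' : c = -(a' : ZMod (n+1)) := by
      rw [ha', show ((((-c).val : ℕ)) : ZMod (n+1)) = -c from ZMod.natCast_rightInverse (-c)]
      ring
    have hgood : GoodZ (fun j => f j - (a' : ZMod (n+1))) := by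
      have he : (fun j => f j - (a' : ZMod (n+1))) = (fun j => f j + c) := by
        funext j; rw [hc', sub_eq_add_neg]
      rw [he]; exact hc
    have hau := huniq a' ⟨ha'n, (good_shift_iff f ha'n).mp hgood⟩
    rw [hc', hau]

lemma card_goodZ (n : ℕ) :
    (n+1) * Nat.card {g : Fin n → ZMod (n+1) // GoodZ g} = (n+1)^n := by
  have hbij : Function.Bijective
      (fun p : ZMod (n+1) × {g : Fin n → ZMod (n+1) // GoodZ g} =>
        (fun j => p.2.1 j + p.1 : Fin n → ZMod (n+1))) := by
    constructor
    · rintro ⟨c₁, g₁, hg₁⟩ ⟨c₂, g₂, hg₂⟩ heq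
      simp only at heq
      set f : Fin n → ZMod (n+1) := fun j => g₁ j + c₁ with hf
      have h₁ : GoodZ (fun j => f j + -c₁) := by
        have : (fun j => f j + -c₁) = g₁ := by funext j; simp [hf]
        rw [this]; exact hg₁
      have h₂ : GoodZ (fun j => f j + -c₂) := by
        have : (fun j => f j + -c₂) = g₂ := by
          funext j
          rw [congrFun heq j]
          simp
        rw [this]; exact hg₂
      obtain ⟨c, -, huniq⟩ := exists_unique_shift f
      have e1 : -c₁ = c := huniq _ h₁
      have e2 : -c₂ = c := huniq _ h₂
      have ec : c₁ = c₂ := by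
        have := e1.trans e2.symm
        exact neg_injective this
      subst ec
      have eg : g₁ = g₂ := by
        funext j
        have := congrFun heq j
        exact add_right_cancel this
      simp [eg]
    · intro f
      obtain ⟨c, hc, -⟩ := exists_unique_shift f
      refine ⟨⟨-c, ⟨fun j => f j + c, hc⟩⟩, ?_⟩
      funext j
      simp
  have h1 := Nat.card_eq_of_bijective _ hbij
  rw [Nat.card_prod, Nat.card_zmod, Nat.card_fun, Nat.card_zmod] at h1
  rw [h1]
  congr 1
  simp [Nat.card_eq_fintype_card]

theorem pf_count_square (n : ℕ) (hn : 1 ≤ n) :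
    (PFset n n).card = (n + 1) ^ (n - 1) := by
  classical
  have hmem : ∀ a : Fin n → Fin n, a ∈ PFset n n ↔
      ∀ t, t ≤ n → t ≤ (Finset.univ.filter (fun j => (a j : ℕ) < t)).card := by
    intro a
    rw [PFset, Finset.mem_filter]
    have hl : ∀ p ∈ prefList a, 1 ≤ p ∧ p ≤ n := by
      intro p hp
      rw [prefList_eq] at hp
      rw [List.mem_ofFn] at hp
      obtain ⟨j, rfl⟩ := hp
      exact ⟨by show 1 ≤ (a j : ℕ) + 1; omega, by show (a j : ℕ) + 1 ≤ n; exact (a j).isLt⟩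
    rw [park_iff n _ ∅ (by simp) hl, pf_cond_iff]
    simp
  set emb : (Fin n → Fin n) → (Fin n → ZMod (n+1)) :=
    fun a j => ((a j : ℕ) : ZMod (n+1)) with hembdef
  have hval : ∀ (a : Fin n → Fin n) (j : Fin n), ((emb a) j).val = (a j : ℕ) := by
    intro a j
    exact ZMod.val_cast_of_lt (by have := (a j).isLt; omega)
  have hQ : ∀ (a : Fin n → Fin n) (t : ℕ),
      Qf (emb a) t = (Finset.univ.filter (fun j => (a j : ℕ) < t)).card := by
    intro a t
    unfold Qf
    congr 1
    apply Finset.filter_congr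
    intro j _
    rw [hval a j]
  have hGood : ∀ a : Fin n → Fin n, GoodZ (emb a) ↔
      ∀ t, t ≤ n → t ≤ (Finset.univ.filter (fun j => (a j : ℕ) < t)).card := by
    intro a
    unfold GoodZ
    constructor
    · intro h t ht; have := h t ht; rwa [hQ a t] at this
    · intro h t ht; rw [hQ a t]; exact h t ht
  have hcard : (PFset n n).card = Nat.card {g : Fin n → ZMod (n+1) // GoodZ g} := by
    rw [← Nat.card_eq_finsetCard]
    apply Nat.card_congr
    refine Equiv.ofBijective
      (fun p => ⟨emb p.1, (hGood p.1).mpr ((hmem p.1).mp p.2)⟩) ⟨?_, ?_⟩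
    · rintro ⟨a, ha⟩ ⟨a', ha'⟩ heq
      simp only [Subtype.mk.injEq] at heq
      apply Subtype.ext
      funext j
      have h1 := congrFun heq j
      have h2 : ((emb a) j).val = ((emb a') j).val := by rw [h1]
      rw [hval a j, hval a' j] at h2
      exact Fin.ext h2
    · rintro ⟨g, hg⟩
      have hlt : ∀ j, (g j).val < n := by
        have h1 := hg n le_rfl
        have h2 : (Finset.univ.filter (fun j => (g j).val < n)) = Finset.univ := by
          apply Finset.eq_univ_of_card
          have h3 : Qf g n ≤ n := Qf_le g n
          rw [Fintype.card_fin]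
          unfold Qf at h3 h1
          omega
        intro j
        have := Finset.mem_filter.mp (h2 ▸ Finset.mem_univ j)
        exact this.2
      set a : Fin n → Fin n := fun j => ⟨(g j).val, hlt j⟩ with hadef
      have hemb : emb a = g := by
        funext j
        show (((g j).val : ℕ) : ZMod (n+1)) = g j
        exact ZMod.natCast_rightInverse (g j)
      have hgood : GoodZ (emb a) := by rw [hemb]; exact hg
      refine ⟨⟨a, (hmem a).mpr ((hGood a).mp hgood)⟩, ?_⟩
      exact Subtype.ext hemb
  rw [hcard]
  have hkey := card_goodZ n
  have hpow : (n+1) * (n+1)^(n-1) = (n+1)^n := by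
    rw [← pow_succ']
    congr 1
    omega
  exact Nat.eq_of_mul_eq_mul_left (by omega) (hkey.trans hpow.symm)
end

section
/- For 1 ≤ m ≤ n and 0 ≤ k ≤ n-1, every classical (m,n)-parking function is a k-Naples (m,n)-parking function; that is, PF(m,n) ⊆ PF(m,n;k). -/
section Aux

/-- In `range'`, everything before the spot found by `find?` fails the predicate. -/
lemma find?_range'_before {P : ℕ → Bool} :
    ∀ (l a s : ℕ), (List.range' a l).find? P = some s →
      ∀ x, a ≤ x → x < s → P x = false := by
  intro l
  induction l with
  | zero => intro a s h; simp at h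
  | succ l ih =>
    intro a s h x hax hxs
    rw [List.range'_succ] at h
    by_cases hPa : P a = true
    · rw [List.find?_cons_of_pos hPa] at h
      simp only [Option.some.injEq] at h
      omega
    · rw [List.find?_cons_of_neg hPa] at h
      rcases Nat.eq_or_lt_of_le hax with rfl | hlt
      · simpa using hPa
      · exact ih (a + 1) s h x hlt hxs

lemma card_filter_split (S : Finset ℕ) (s t : ℕ) (hst : s ≤ t) :
    (S.filter (fun x => s ≤ x)).card
      = (S.filter (fun x => t ≤ x)).card + (S.filter (fun x => s ≤ x ∧ x < t)).card := by
  classical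
  have hU : S.filter (fun x => s ≤ x)
      = S.filter (fun x => t ≤ x) ∪ S.filter (fun x => s ≤ x ∧ x < t) := by
    rw [← Finset.filter_or]
    exact Finset.filter_congr (fun x _ => by constructor <;> intro h <;> omega)
  rw [hU, Finset.card_union_of_disjoint]
  rw [Finset.disjoint_left]
  intro x hx hx'
  simp only [Finset.mem_filter] at hx hx'
  omega

/-- Facts about a successful `forwardSpot`. -/
lemma forwardSpot_spec {n p s : ℕ} {occ : Finset ℕ}
    (h : forwardSpot n occ p = some s) :
    p ≤ s ∧ s ≤ n ∧ s ∉ occ ∧ ∀ x, p ≤ x → x < s → x ∈ occ := by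
  have hmem := List.mem_of_find?_eq_some h
  rw [List.mem_range'_1] at hmem
  have hP := List.find?_some h
  have hs : s ∉ occ := of_decide_eq_true hP
  refine ⟨hmem.1, by omega, hs, ?_⟩
  intro x hpx hxs
  have := find?_range'_before _ _ _ h x hpx hxs
  have := of_decide_eq_false this
  exact Decidable.of_not_not this

/-- Left-shift relation is preserved when the new left spot is at most the new right spot. -/
lemma shift_insert {occ occ' : Finset ℕ} {s s' : ℕ}
    (hss : s' ≤ s) (h' : s' ∉ occ') (h : s ∉ occ)
    (hR : ∀ t, (occ'.filter (fun x => t ≤ x)).card ≤ (occ.filter (fun x => t ≤ x)).card) :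
    ∀ t, ((insert s' occ').filter (fun x => t ≤ x)).card
        ≤ ((insert s occ).filter (fun x => t ≤ x)).card := by
  intro t
  rw [Finset.filter_insert, Finset.filter_insert]
  by_cases ht' : t ≤ s'
  · have ht : t ≤ s := le_trans ht' hss
    rw [if_pos ht', if_pos ht,
      Finset.card_insert_of_notMem (by simp [h']),
      Finset.card_insert_of_notMem (by simp [h])]
    exact Nat.succ_le_succ (hR t)
  · rw [if_neg ht']
    by_cases ht : t ≤ s
    · rw [if_pos ht]
      exact le_trans (hR t) (Finset.card_le_card (Finset.subset_insert _ _))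
    · rw [if_neg ht]; exact hR t

/-- Main invariant lemma: the Naples process succeeds from any left-shifted state. -/
lemma naples_of_classical (n k : ℕ) :
    ∀ (ps : List ℕ) (occ occ' : Finset ℕ),
    (∀ x ∈ occ, x ≤ n) → (∀ x ∈ occ', x ≤ n) →
    (∀ t, (occ'.filter (fun x => t ≤ x)).card ≤ (occ.filter (fun x => t ≤ x)).card) →
    (classicalPark n ps occ).isSome → (naplesPark n k ps occ').isSome := by
  intro ps
  induction ps with
  | nil => intro occ occ' _ _ _ _; simp [naplesPark]
  | cons p rest ih =>
    intro occ occ' hb hb' hR hC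
    rw [show classicalPark n (p :: rest) occ =
        (match forwardSpot n occ p with
          | none => none
          | some s => classicalPark n rest (insert s occ)) from rfl] at hC
    cases hfs : forwardSpot n occ p with
    | none => rw [hfs] at hC; simp at hC
    | some s =>
      rw [hfs] at hC
      obtain ⟨hps, hsn, hsocc, hmin⟩ := forwardSpot_spec hfs
      have hbS : ∀ x ∈ insert s occ, x ≤ n := by
        intro x hx; rcases Finset.mem_insert.mp hx with rfl | hx
        · exact hsn
        · exact hb x hx
      rw [show naplesPark n k (p :: rest) occ' =
          (match naplesSpot n k occ' p with
            | none => none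
            | some s => naplesPark n k rest (insert s occ')) from rfl]
      by_cases hp : p ∈ occ'
      · cases hbk : (backwardCandidates k p).find? (fun s => decide (s ∉ occ')) with
        | some s' =>
          have hns : naplesSpot n k occ' p = some s' := by
            simp only [naplesSpot, if_pos hp, hbk]
          rw [hns]
          have hs'occ : s' ∉ occ' := by simpa using List.find?_some hbk
          have hs'mem := List.mem_of_find?_eq_some hbk
          have hs'lt : 1 ≤ s' ∧ s' < p := by
            simp only [backwardCandidates, List.mem_filter, List.mem_map,
              List.mem_range] at hs'mem
            obtain ⟨⟨i, hi, rfl⟩, h1⟩ := hs'mem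
            have h1' : 1 ≤ p - (i + 1) := of_decide_eq_true h1
            omega
          exact ih (insert s occ) (insert s' occ') hbS
            (fun x hx => by
              rcases Finset.mem_insert.mp hx with rfl | hx
              · omega
              · exact hb' x hx)
            (shift_insert (by omega) hs'occ hsocc hR) hC
        | none =>
          -- backward search failed; must go forward
          have hpn : p ≤ n := le_trans hps hsn
          -- the forward spot for occ' exists
          cases hfs' : forwardSpot n occ' p with
          | none =>
            exfalso
            rw [forwardSpot, List.find?_eq_none] at hfs'
            have hsub : Finset.Icc p n ⊆ occ'.filter (fun x => p ≤ x) := by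
              intro x hx
              rw [Finset.mem_Icc] at hx
              have hxl : x ∈ List.range' p (n + 1 - p) := by
                rw [List.mem_range'_1]; omega
              have := hfs' x hxl
              simp only [decide_eq_true_eq, not_not] at this
              exact Finset.mem_filter.mpr ⟨this, hx.1⟩
            have hsub2 : occ.filter (fun x => p ≤ x) ⊆ (Finset.Icc p n).erase s := by
              intro x hx
              rw [Finset.mem_filter] at hx
              rw [Finset.mem_erase, Finset.mem_Icc]
              exact ⟨fun h => hsocc (h ▸ hx.1), hx.2, hb x hx.1⟩
            have c1 := Finset.card_le_card hsub
            have c2 := Finset.card_le_card hsub2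
            have c3 := hR p
            rw [Finset.card_erase_of_mem (Finset.mem_Icc.mpr ⟨hps, hsn⟩)] at c2
            rw [Nat.card_Icc] at c1 c2
            omega
          | some s'' =>
            have hns : naplesSpot n k occ' p = some s'' := by
              simp only [naplesSpot, if_pos hp, hbk]; exact hfs'
            rw [hns]
            obtain ⟨hps'', hs''n, hs''occ, hmin''⟩ := forwardSpot_spec hfs'
            refine ih (insert s occ) (insert s'' occ') hbS
              (fun x hx => by
                rcases Finset.mem_insert.mp hx with rfl | hx
                · exact hs''n
                · exact hb' x hx) ?_ hC
            -- the interesting inequality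
            intro t
            rw [Finset.filter_insert, Finset.filter_insert]
            by_cases ht : t ≤ s
            · rw [if_pos ht, Finset.card_insert_of_notMem (by simp [hsocc])]
              by_cases ht'' : t ≤ s''
              · rw [if_pos ht'', Finset.card_insert_of_notMem (by simp [hs''occ])]
                exact Nat.succ_le_succ (hR t)
              · rw [if_neg ht'']
                exact le_trans (hR t) (Nat.le_succ _)
            · rw [if_neg ht]
              by_cases ht'' : t ≤ s''
              · -- hard case: s < t ≤ s''
                rw [if_pos ht'', Finset.card_insert_of_notMem (by simp [hs''occ])]
                have hst : s < t := by omega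
                have split' := card_filter_split occ' s t (by omega)
                have split := card_filter_split occ s t (by omega)
                have hIcc : Finset.Icc s (t - 1) ⊆ occ'.filter (fun x => s ≤ x ∧ x < t) := by
                  intro x hx
                  rw [Finset.mem_Icc] at hx
                  have hxo : x ∈ occ' := hmin'' x (by omega) (by omega)
                  exact Finset.mem_filter.mpr ⟨hxo, hx.1, by omega⟩
                have hIcc2 : occ.filter (fun x => s ≤ x ∧ x < t) ⊆ Finset.Icc (s + 1) (t - 1) := by
                  intro x hx
                  rw [Finset.mem_filter] at hx
                  rw [Finset.mem_Icc]
                  have : x ≠ s := fun h => hsocc (h ▸ hx.1)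
                  omega
                have c1 := Finset.card_le_card hIcc
                have c2 := Finset.card_le_card hIcc2
                have c3 := hR s
                rw [Nat.card_Icc] at c1 c2
                omega
              · rw [if_neg ht'']; exact hR t
      · have hns : naplesSpot n k occ' p = some p := by simp [naplesSpot, hp]
        rw [hns]
        exact ih (insert s occ) (insert p occ') hbS
          (fun x hx => by
            rcases Finset.mem_insert.mp hx with rfl | hx
            · omega
            · exact hb' x hx)
          (shift_insert hps hp hsocc hR) hC

end Aux

theorem pf_subset_naples (m n k : ℕ) (hm : 1 ≤ m) (hmn : m ≤ n) (hk : k ≤ n - 1) :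
    PFset m n ⊆ NPFset m n k := by
  intro a ha
  rw [PFset, Finset.mem_filter] at ha
  rw [NPFset, Finset.mem_filter]
  refine ⟨Finset.mem_univ _, ?_⟩
  exact naples_of_classical n k (prefList a) ∅ ∅ (by simp) (by simp) (by simp) ha.2
end

section
/- For 1 ≤ m ≤ n and 0 ≤ k ≤ k' ≤ n-1, every k-Naples (m,n)-parking function is a k'-Naples (m,n)-parking function, i.e. PF(m,n;k) ⊆ PF(m,n;k'). -/
def cnt (occ : Finset ℕ) (j : ℕ) : ℕ := (occ.filter (fun t => j ≤ t)).card

def Dom (occ' occ : Finset ℕ) : Prop := ∀ j, cnt occ' j ≤ cnt occ j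

lemma cnt_split (occ : Finset ℕ) (j b : ℕ) (h : j ≤ b + 1) :
    cnt occ j = (occ.filter (fun t => j ≤ t ∧ t ≤ b)).card + cnt occ (b + 1) := by
  unfold cnt
  rw [← Finset.card_union_of_disjoint]
  · congr 1
    ext t
    simp only [Finset.mem_filter, Finset.mem_union]
    by_cases hm : t ∈ occ <;> simp [hm] <;> omega
  · rw [Finset.disjoint_left]
    intro t ht ht'
    simp only [Finset.mem_filter] at ht ht'
    omega

lemma cnt_interval_le (occ : Finset ℕ) (j b x : ℕ) (hx : x ∉ occ) (hjx : j ≤ x) (hxb : x ≤ b) :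
    (occ.filter (fun t => j ≤ t ∧ t ≤ b)).card ≤ b - j := by
  have hsub : occ.filter (fun t => j ≤ t ∧ t ≤ b) ⊆ (Finset.Icc j b).erase x := by
    intro t ht
    simp only [Finset.mem_filter] at ht
    simp only [Finset.mem_erase, Finset.mem_Icc]
    exact ⟨fun h => hx (h ▸ ht.1), ht.2⟩
  calc _ ≤ ((Finset.Icc j b).erase x).card := Finset.card_le_card hsub
    _ = (Finset.Icc j b).card - 1 := Finset.card_erase_of_mem (by simp [Finset.mem_Icc]; omega)
    _ = b - j := by rw [Nat.card_Icc]; omega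

lemma cnt_interval_full (occ : Finset ℕ) (j b : ℕ) (h : ∀ t, j ≤ t → t ≤ b → t ∈ occ) :
    b + 1 - j ≤ (occ.filter (fun t => j ≤ t ∧ t ≤ b)).card := by
  have hsub : Finset.Icc j b ⊆ occ.filter (fun t => j ≤ t ∧ t ≤ b) := by
    intro t ht
    simp only [Finset.mem_Icc] at ht
    simp only [Finset.mem_filter]
    exact ⟨h t ht.1 ht.2, ht⟩
  calc b + 1 - j = (Finset.Icc j b).card := by rw [Nat.card_Icc]
    _ ≤ _ := Finset.card_le_card hsub

lemma cnt_insert (o : Finset ℕ) (x j : ℕ) (hx : x ∉ o) :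
    cnt (insert x o) j = cnt o j + if j ≤ x then 1 else 0 := by
  unfold cnt
  rw [Finset.filter_insert]
  split
  · rw [Finset.card_insert_of_notMem (by simp [hx])]
  · simp

lemma strictA (occ occ' : Finset ℕ) (s s' : ℕ) (hdom : Dom occ' occ)
    (hfull : ∀ t, s < t → t ≤ s' → t ∈ occ) (hs' : s' ∉ occ') :
    ∀ j, s < j → j ≤ s' → cnt occ' j < cnt occ j := by
  intro j hsj hjs'
  have h1 := cnt_split occ' j s' (by omega)
  have h2 := cnt_split occ j s' (by omega)
  have h3 := cnt_interval_le occ' j s' s' hs' hjs' le_rfl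
  have h4 := cnt_interval_full occ j s' (fun t ht ht' => hfull t (by omega) ht')
  have h5 := hdom (s' + 1)
  omega

lemma strictB (occ occ' : Finset ℕ) (s s' : ℕ) (hdom : Dom occ' occ)
    (hfull' : ∀ t, s ≤ t → t < s' → t ∈ occ') (hs : s ∉ occ) :
    ∀ j, s < j → j ≤ s' → cnt occ' j < cnt occ j := by
  intro j hsj hjs'
  have h1 := cnt_split occ' s (j - 1) (by omega)
  have h2 := cnt_split occ s (j - 1) (by omega)
  have h3 := cnt_interval_le occ s (j - 1) s hs le_rfl (by omega)
  have h4 := cnt_interval_full occ' s (j - 1) (fun t ht ht' => hfull' t ht (by omega))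
  have h5 := hdom s
  have hj : j - 1 + 1 = j := by omega
  rw [hj] at h1 h2
  omega

lemma dom_insert (occ occ' : Finset ℕ) (s s' : ℕ) (hs : s ∉ occ) (hs' : s' ∉ occ')
    (hdom : Dom occ' occ)
    (hstrict : ∀ j, s < j → j ≤ s' → cnt occ' j < cnt occ j) :
    Dom (insert s' occ') (insert s occ) := by
  intro j
  rw [cnt_insert occ s j hs, cnt_insert occ' s' j hs']
  by_cases h1 : j ≤ s'
  · by_cases h2 : j ≤ s
    · have := hdom j; simp [h1, h2]; omega
    · have := hstrict j (by omega) h1; simp [h1, h2]; omega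
  · have := hdom j
    split <;> omega

-- find? lemmas
lemma find?_range'_some_s4 (occ : Finset ℕ) :
    ∀ (b a s : ℕ), (List.range' a b).find? (fun s => decide (s ∉ occ)) = some s →
      a ≤ s ∧ s < a + b ∧ s ∉ occ ∧ ∀ t, a ≤ t → t < s → t ∈ occ := by
  intro b
  induction b with
  | zero => intro a s h; simp [List.range'] at h
  | succ b ih =>
    intro a s h
    rw [List.range'_succ, List.find?_cons] at h
    cases ha : (decide (a ∉ occ)) <;> rw [ha] at h
    · have ha' : a ∈ occ := by simpa using ha
      obtain ⟨h1, h2, h3, h4⟩ := ih (a + 1) s h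
      exact ⟨by omega, by omega, h3, fun t ht ht' => by
        rcases Nat.eq_or_lt_of_le ht with rfl | hlt
        · exact ha'
        · exact h4 t (by omega) ht'⟩
    · have ha' : a ∉ occ := by simpa using ha
      simp only [Option.some.injEq] at h
      subst h
      exact ⟨le_rfl, by omega, ha', fun t ht ht' => by omega⟩

lemma find?_range'_none_s4 (occ : Finset ℕ) (b a : ℕ)
    (h : (List.range' a b).find? (fun s => decide (s ∉ occ)) = none) :
    ∀ t, a ≤ t → t < a + b → t ∈ occ := by
  rw [List.find?_eq_none] at h
  intro t ht ht'
  have := h t (by rw [List.mem_range']; exact ⟨t - a, by omega⟩)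
  simpa using this

lemma bc_mem (k p t : ℕ) : t ∈ backwardCandidates k p ↔ 1 ≤ t ∧ t < p ∧ p ≤ t + k := by
  unfold backwardCandidates
  simp only [List.mem_filter, List.mem_map, List.mem_range, decide_eq_true_eq]
  constructor
  · rintro ⟨⟨i, hi, rfl⟩, h1⟩; omega
  · rintro ⟨h1, h2, h3⟩; exact ⟨⟨p - t - 1, by omega, by omega⟩, h1⟩

lemma bc_pairwise (k p : ℕ) : (backwardCandidates k p).Pairwise (· > ·) := by
  unfold backwardCandidates
  have h1 : (((List.range k).map (fun i => p - (i + 1)))).Pairwise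
      (fun a b => 1 ≤ a → 1 ≤ b → a > b) := by
    rw [List.pairwise_map]
    exact (List.pairwise_lt_range (n := k)).imp (fun h ha hb => by omega)
  have h2 := h1.filter (fun s => decide (1 ≤ s))
  refine h2.imp_of_mem (fun ha hb h => ?_)
  rw [List.mem_filter, decide_eq_true_eq] at ha hb
  exact h ha.2 hb.2

lemma find?_pairwise_some {l : List ℕ} {f : ℕ → Bool} {s : ℕ}
    (hp : l.Pairwise (· > ·)) (h : l.find? f = some s) :
    ∀ t ∈ l, s < t → f t = false := by
  induction l with
  | nil => simp at h
  | cons a l ih =>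
    rw [List.find?_cons] at h
    rw [List.pairwise_cons] at hp
    cases hfa : f a <;> rw [hfa] at h
    · intro t ht hst
      rcases List.mem_cons.mp ht with rfl | htl
      · exact hfa
      · exact ih hp.2 h t htl hst
    · simp only [Option.some.injEq] at h
      subst h
      intro t ht hst
      rcases List.mem_cons.mp ht with rfl | htl
      · omega
      · have := hp.1 t htl; omega

/-- Characterization of a successful k-Naples spot. -/
lemma naplesSpot_facts {n k p s : ℕ} {occ : Finset ℕ} (hp1 : 1 ≤ p) (hpn : p ≤ n)
    (hs : naplesSpot n k occ p = some s) :
    s ∉ occ ∧ 1 ≤ s ∧ s ≤ n ∧ p ≤ s + k ∧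
      (∀ t, s < t → t < p → t ∈ occ) ∧ (∀ t, p ≤ t → t < s → t ∈ occ) ∧
      (s < p → p ∈ occ) := by
  unfold naplesSpot at hs
  by_cases hpo : p ∈ occ
  · rw [if_pos hpo] at hs
    cases hbc : (backwardCandidates k p).find? (fun s => decide (s ∉ occ)) with
    | some s₀ =>
      rw [hbc] at hs
      simp only [Option.some.injEq] at hs
      subst hs
      have hmem := List.mem_of_find?_eq_some hbc
      have hfree : s₀ ∉ occ := by simpa using List.find?_some hbc
      rw [bc_mem] at hmem
      have hback : ∀ t, s₀ < t → t < p → t ∈ occ := by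
        intro t h1 h2
        have ht : t ∈ backwardCandidates k p := (bc_mem k p t).mpr ⟨by omega, h2, by omega⟩
        have := find?_pairwise_some (bc_pairwise k p) hbc t ht h1
        simpa using this
      exact ⟨hfree, by omega, by omega, by omega, hback, fun t h1 h2 => by omega,
        fun _ => hpo⟩
    | none =>
      rw [hbc] at hs
      have hbcall : ∀ t, 1 ≤ t → t < p → p ≤ t + k → t ∈ occ := by
        rw [List.find?_eq_none] at hbc
        intro t h1 h2 h3
        have := hbc t ((bc_mem k p t).mpr ⟨h1, h2, h3⟩)
        simpa using this
      unfold forwardSpot at hs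
      obtain ⟨h1, h2, h3, h4⟩ := find?_range'_some_s4 occ _ _ _ hs
      exact ⟨h3, by omega, by omega, by omega, fun t ha hb => hbcall t (by omega) hb (by omega),
        h4, fun h => by omega⟩
  · rw [if_neg hpo] at hs
    simp only [Option.some.injEq] at hs
    subst hs
    exact ⟨hpo, hp1, hpn, by omega, fun t h1 h2 => by omega, fun t h1 h2 => by omega,
      fun h => by omega⟩

lemma step (n k k' p : ℕ) (hkk : k ≤ k') (hp1 : 1 ≤ p) (hpn : p ≤ n)
    (occ occ' : Finset ℕ) (hocc : occ ⊆ Finset.Icc 1 n) (hocc' : occ' ⊆ Finset.Icc 1 n)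
    (hdom : Dom occ' occ) (s : ℕ) (hs : naplesSpot n k occ p = some s) :
    s ∉ occ ∧ 1 ≤ s ∧ s ≤ n ∧
      ∃ s', naplesSpot n k' occ' p = some s' ∧ s' ∉ occ' ∧ 1 ≤ s' ∧ s' ≤ n ∧
        Dom (insert s' occ') (insert s occ) := by
  obtain ⟨hfree, hs1, hsn, hsk, hback, hfwd, hsp⟩ := naplesSpot_facts hp1 hpn hs
  refine ⟨hfree, hs1, hsn, ?_⟩
  have hsk' : p ≤ s + k' := by omega
  unfold naplesSpot
  by_cases hpo' : p ∈ occ'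
  · rw [if_pos hpo']
    cases hbc' : (backwardCandidates k' p).find? (fun s => decide (s ∉ occ')) with
    | some s' =>
      -- Case B': backward parking for k'
      have hmem := List.mem_of_find?_eq_some hbc'
      have hfree' : s' ∉ occ' := by simpa using List.find?_some hbc'
      rw [bc_mem] at hmem
      refine ⟨s', rfl, hfree', by omega, by omega, ?_⟩
      refine dom_insert occ occ' s s' hfree hfree' hdom ?_
      -- strictness via Lemma A : interval (s, s'] ⊆ occ, s' ∉ occ'
      refine strictA occ occ' s s' hdom (fun t h1 h2 => hback t h1 (by omega)) hfree'
    | none =>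
      have hbcall' : ∀ t, 1 ≤ t → t < p → p ≤ t + k' → t ∈ occ' := by
        rw [List.find?_eq_none] at hbc'
        intro t h1 h2 h3
        have := hbc' t ((bc_mem k' p t).mpr ⟨h1, h2, h3⟩)
        simpa using this
      cases hfw : (List.range' p (n + 1 - p)).find? (fun s => decide (s ∉ occ')) with
      | none =>
        -- Case D': contradiction
        exfalso
        have hall : ∀ t, s ≤ t → t ≤ n → t ∈ occ' := by
          intro t h1 h2
          by_cases htp : p ≤ t
          · exact find?_range'_none_s4 occ' _ _ hfw t htp (by omega)
          · exact hbcall' t (by omega) (by omega) (by omega)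
        have h1 : n + 1 - s ≤ cnt occ' s := by
          have := cnt_interval_full occ' s n hall
          calc n + 1 - s ≤ (occ'.filter (fun t => s ≤ t ∧ t ≤ n)).card := this
            _ ≤ cnt occ' s := Finset.card_le_card (Finset.filter_subset_filter _
                (fun t ht => ht) |>.trans (by intro t ht; simp only [Finset.mem_filter] at *; exact ⟨ht.1, ht.2.1⟩))
        have h2 : cnt occ s ≤ n - s := by
          have := cnt_interval_le occ s n s hfree le_rfl hsn
          have heq : occ.filter (fun t => s ≤ t) = occ.filter (fun t => s ≤ t ∧ t ≤ n) := by
            apply Finset.filter_congr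
            intro t ht
            have := hocc ht
            simp only [Finset.mem_Icc] at this
            constructor
            · intro h; exact ⟨h, by omega⟩
            · intro h; exact h.1
          unfold cnt
          rw [heq]
          exact this
        have := hdom s
        omega
      | some s' =>
        -- Case C': forward parking for k'
        obtain ⟨h1, h2, h3, h4⟩ := find?_range'_some_s4 occ' _ _ _ hfw
        refine ⟨s', hfw, h3, by omega, by omega, ?_⟩
        refine dom_insert occ occ' s s' hfree h3 hdom ?_
        refine strictB occ occ' s s' hdom (fun t ht ht' => ?_) hfree
        by_cases htp : p ≤ t
        · exact h4 t htp ht'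
        · exact hbcall' t (by omega) (by omega) (by omega)
  · rw [if_neg hpo']
    -- Case A': s' = p
    refine ⟨p, rfl, hpo', hp1, hpn, ?_⟩
    refine dom_insert occ occ' s p hfree hpo' hdom ?_
    refine strictA occ occ' s p hdom (fun t h1 h2 => ?_) hpo'
    rcases Nat.lt_or_ge t p with h | h
    · exact hback t h1 h
    · have : t = p := by omega
      subst this
      exact hsp (by omega)

lemma park_mono (n k k' : ℕ) (hkk : k ≤ k') :
    ∀ (l : List ℕ) (occ occ' : Finset ℕ),
      (∀ p ∈ l, 1 ≤ p ∧ p ≤ n) → occ ⊆ Finset.Icc 1 n → occ' ⊆ Finset.Icc 1 n →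
      Dom occ' occ → (naplesPark n k l occ).isSome → (naplesPark n k' l occ').isSome := by
  intro l
  induction l with
  | nil => intro occ occ' _ _ _ _ _; simp [naplesPark]
  | cons p rest ih =>
    intro occ occ' hl hocc hocc' hdom hpark
    have hp := hl p (List.mem_cons_self (a := p) (l := rest))
    rw [naplesPark] at hpark
    cases hsp : naplesSpot n k occ p with
    | none => rw [hsp] at hpark; simp at hpark
    | some s =>
      rw [hsp] at hpark
      obtain ⟨hfree, hs1, hsn, s', hsp', hfree', hs1', hsn', hdom'⟩ :=
        step n k k' p hkk hp.1 hp.2 occ occ' hocc hocc' hdom s hsp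
      rw [naplesPark, hsp']
      refine ih (insert s occ) (insert s' occ') (fun q hq => hl q (List.mem_cons_of_mem p hq))
        ?_ ?_ hdom' hpark
      · intro t ht
        rcases Finset.mem_insert.mp ht with rfl | h
        · simp [Finset.mem_Icc]; omega
        · exact hocc h
      · intro t ht
        rcases Finset.mem_insert.mp ht with rfl | h
        · simp [Finset.mem_Icc]; omega
        · exact hocc' h

theorem naples_monotone (m n k k' : ℕ) (hm : 1 ≤ m) (hmn : m ≤ n)
    (hkk' : k ≤ k') (hk' : k' ≤ n - 1) :
    NPFset m n k ⊆ NPFset m n k' := by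
  intro a ha
  simp only [NPFset, Finset.mem_filter, Finset.mem_univ, true_and] at ha ⊢
  refine park_mono n k k' hkk' (prefList a) ∅ ∅ ?_ (by simp) (by simp) (fun j => le_rfl) ha
  intro p hp
  unfold prefList at hp
  obtain ⟨y, hy, rfl⟩ := List.mem_map.mp hp
  have hyn : y < n := by
    simp at hy
    obtain ⟨i, hi⟩ := hy
    omega
  omega
end

section
/- There exists a bijection between the set B(m,n;k) of contained k-Naples (m,n)-parking functions and the set PF(m,n) of classical (m,n)-parking functions, for all 1 ≤ m ≤ n and 0 ≤ k ≤ n-1. In particular |B(m,n;k)| = (n-m+1)(n+1)^{m-1}. -/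
/-! ### find? helpers on mapped ranges -/

lemma find?_map_range'_some {α : Type*} (g : ℕ → α) (pred : α → Bool) :
    ∀ (b a j : ℕ), a ≤ j → j < a + b → pred (g j) = true →
      (∀ i, a ≤ i → i < j → pred (g i) = false) →
      ((List.range' a b).map g).find? pred = some (g j) := by
  intro b
  induction b with
  | zero => intro a j h1 h2 _ _; omega
  | succ b ihb =>
    intro a j h1 h2 hj hlt
    rw [List.range'_succ, List.map_cons]
    rcases eq_or_lt_of_le h1 with rfl | h
    · rw [List.find?_cons_of_pos hj]
    · rw [List.find?_cons_of_neg (by simp [hlt a le_rfl h])]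
      exact ihb (a + 1) j h (by omega) hj (fun i hi1 hi2 => hlt i (by omega) hi2)

lemma find?_map_range'_none {α : Type*} (g : ℕ → α) (pred : α → Bool) (b a : ℕ)
    (h : ∀ j, a ≤ j → j < a + b → pred (g j) = false) :
    ((List.range' a b).map g).find? pred = none := by
  rw [List.find?_eq_none]
  intro x hx
  simp only [List.mem_map, List.mem_range'_1] at hx
  obtain ⟨j, ⟨hj1, hj2⟩, rfl⟩ := hx
  simp [h j hj1 hj2]

lemma find?_map_range'_inv {α : Type*} (g : ℕ → α) (pred : α → Bool) :
    ∀ (b a : ℕ) {s : α}, ((List.range' a b).map g).find? pred = some s →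
      ∃ j, a ≤ j ∧ j < a + b ∧ g j = s ∧ pred s = true ∧
        ∀ i, a ≤ i → i < j → pred (g i) = false := by
  intro b
  induction b with
  | zero => intro a s h; simp at h
  | succ b ihb =>
    intro a s h
    rw [List.range'_succ, List.map_cons] at h
    cases hpa : pred (g a) with
    | true =>
      rw [List.find?_cons_of_pos hpa] at h
      obtain rfl : g a = s := by injection h
      exact ⟨a, le_rfl, by omega, rfl, hpa, fun i h1 h2 => by omega⟩
    | false =>
      rw [List.find?_cons_of_neg (by simp [hpa])] at h
      obtain ⟨j, hj1, hj2, hj3, hj4, hj5⟩ := ihb (a + 1) h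
      exact ⟨j, by omega, by omega, hj3, hj4, fun i h1 h2 => by
        rcases eq_or_lt_of_le h1 with rfl | h' 
        · exact hpa
        · exact hj5 i h' h2⟩

/-! ### the circular process -/

def circList (n k : ℕ) (p : ZMod (n + 1)) : List (ZMod (n + 1)) :=
  p :: (((List.range' 0 k).map fun i => p - ((i + 1 : ℕ) : ZMod (n + 1))) ++
    ((List.range' 0 n).map fun i => p + ((i + 1 : ℕ) : ZMod (n + 1))))

def circSpot (n k : ℕ) (occ : Finset (ZMod (n + 1))) (p : ZMod (n + 1)) :
    Option (ZMod (n + 1)) :=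
  (circList n k p).find? fun s => decide (s ∉ occ)

def circRun (n k : ℕ) : List (ZMod (n + 1)) → Finset (ZMod (n + 1)) → Finset (ZMod (n + 1))
  | [], occ => occ
  | p :: rest, occ =>
    match circSpot n k occ p with
    | none => occ
    | some s => circRun n k rest (insert s occ)

lemma mem_circList (n k : ℕ) (p x : ZMod (n + 1)) : x ∈ circList n k p := by
  rcases eq_or_ne x p with rfl | hxp
  · exact List.mem_cons_self
  · have hne : x - p ≠ 0 := fun h => hxp (sub_eq_zero.mp h)
    have hv0 : (x - p).val ≠ 0 := fun h => hne ((ZMod.val_eq_zero _).mp h)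
    have hvlt : (x - p).val < n + 1 := ZMod.val_lt _
    refine List.mem_cons_of_mem _ (List.mem_append_right _ ?_)
    simp only [List.mem_map, List.mem_range'_1]
    refine ⟨(x - p).val - 1, by omega, ?_⟩
    have : (((x - p).val - 1 + 1 : ℕ) : ZMod (n + 1)) = x - p := by
      rw [Nat.sub_add_cancel (by omega)]
      exact ZMod.natCast_rightInverse _
    rw [this]; ring

lemma circSpot_spec (n k : ℕ) (occ : Finset (ZMod (n + 1))) (p : ZMod (n + 1))
    (h : ∃ x : ZMod (n + 1), x ∉ occ) :
    ∃ s, circSpot n k occ p = some s ∧ s ∉ occ := by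
  obtain ⟨x, hx⟩ := h
  have : ((circList n k p).find? fun s => decide (s ∉ occ)).isSome = true := by
    rw [List.find?_isSome]
    exact ⟨x, mem_circList n k p x, by simpa using hx⟩
  obtain ⟨s, hs⟩ := Option.isSome_iff_exists.mp this
  exact ⟨s, hs, by simpa using List.find?_some hs⟩

lemma subset_circRun (n k : ℕ) : ∀ (l : List (ZMod (n + 1))) (occ), occ ⊆ circRun n k l occ := by
  intro l
  induction l with
  | nil => intro occ; exact Finset.Subset.refl _
  | cons p rest ih =>
    intro occ
    cases hcs : circSpot n k occ p with
    | none => rw [circRun, hcs]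
    | some s =>
      rw [circRun, hcs]
      exact (Finset.subset_insert _ _).trans (ih (insert s occ))

lemma circRun_card (n k : ℕ) : ∀ (l : List (ZMod (n + 1))) (occ),
    occ.card + l.length ≤ n + 1 → (circRun n k l occ).card = occ.card + l.length := by
  intro l
  induction l with
  | nil => intro occ _; simp [circRun]
  | cons p rest ih =>
    intro occ hc
    have hex : ∃ x : ZMod (n + 1), x ∉ occ := by
      by_contra hall
      push_neg at hall
      have h1 : occ = Finset.univ := Finset.eq_univ_iff_forall.mpr hall
      have hcu : occ.card = n + 1 := by rw [h1, Finset.card_univ, ZMod.card]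
      simp only [List.length_cons] at hc
      omega
    obtain ⟨s, hs, hsocc⟩ := circSpot_spec n k occ p hex
    have hci : (insert s occ).card = occ.card + 1 := Finset.card_insert_of_notMem hsocc
    simp only [List.length_cons] at hc
    rw [circRun, hs, ih (insert s occ) (by omega), hci]
    simp only [List.length_cons]; omega

/-! ### equivariance -/

lemma circList_shift (n k : ℕ) (p c : ZMod (n + 1)) :
    circList n k (p + c) = (circList n k p).map (· + c) := by
  simp only [circList, List.map_cons, List.map_append, List.map_map]
  refine congrArg₂ _ rfl (congrArg₂ _ ?_ ?_) <;>
    exact List.map_congr_left fun i _ => by simp [Function.comp]; ring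

lemma circSpot_shift (n k : ℕ) (occ : Finset (ZMod (n + 1))) (p c : ZMod (n + 1)) :
    circSpot n k (occ.image (· + c)) (p + c) = (circSpot n k occ p).map (· + c) := by
  rw [circSpot, circList_shift, List.find?_map]
  have hpred : ((fun s => decide (s ∉ occ.image (· + c))) ∘ (· + c)) =
      fun s => decide (s ∉ occ) := by
    funext s
    simp only [Function.comp_apply, decide_eq_decide, Finset.mem_image]
    constructor
    · intro h hs; exact h ⟨s, hs, rfl⟩
    · rintro h ⟨x, hx, hxc⟩
      exact h (((add_left_inj c).mp hxc) ▸ hx)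
  rw [hpred, circSpot]

lemma circRun_shift (n k : ℕ) : ∀ (l : List (ZMod (n + 1))) (occ) (c),
    circRun n k (l.map (· + c)) (occ.image (· + c)) = (circRun n k l occ).image (· + c) := by
  intro l
  induction l with
  | nil => intro occ c; simp [circRun]
  | cons p rest ih =>
    intro occ c
    cases hcs : circSpot n k occ p with
    | none =>
      rw [List.map_cons, circRun, circRun, circSpot_shift, hcs]
      simp
    | some s =>
      rw [List.map_cons, circRun, circRun, circSpot_shift, hcs]
      simp only [Option.map_some]
      rw [← ih (insert s occ) c]
      congr 1
      rw [Finset.image_insert]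

lemma zero_mem_circRun (n k : ℕ) : ∀ (l : List (ZMod (n + 1))) (occ),
    ((0 : ZMod (n + 1)) ∈ l ∨ 0 ∈ occ) → 0 ∈ circRun n k l occ := by
  intro l
  induction l with
  | nil => intro occ h; simpa [circRun] using h
  | cons p rest ih =>
    intro occ h
    rw [circRun]
    cases hcs : circSpot n k occ p with
    | none =>
      rw [circSpot, List.find?_eq_none] at hcs
      have := hcs 0 (mem_circList n k p 0)
      simp at this
      exact this
    | some s =>
      rcases h with h | h
      · rcases List.mem_cons.mp h with h | h
        · -- p = 0
          by_cases h0 : (0 : ZMod (n + 1)) ∈ occ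
          · exact ih _ (Or.inr (Finset.mem_insert_of_mem h0))
          · have : circSpot n k occ p = some 0 := by
              subst h
              rw [circSpot, circList]
              exact List.find?_cons_of_pos (by simp [h0])
            rw [this] at hcs
            obtain rfl : s = (0 : ZMod (n+1)) := by
              simpa using hcs.symm
            exact ih _ (Or.inr (Finset.mem_insert_self _ _))
        · exact ih _ (Or.inl h)
      · exact ih _ (Or.inr (Finset.mem_insert_of_mem h))
/-! ### part 2 : transfer between the linear contained Naples process and the circular one -/

lemma find?_map_range'_some' {α : Type*} (g : ℕ → α) (pred : α → Bool) (b a j : ℕ) (s : α)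
    (h1 : a ≤ j) (h2 : j < a + b) (hs : g j = s) (hj : pred s = true)
    (hlt : ∀ i, a ≤ i → i < j → pred (g i) = false) :
    ((List.range' a b).map g).find? pred = some s := by
  subst hs; exact find?_map_range'_some g pred b a j h1 h2 hj hlt

lemma cast_le_inj {n a b : ℕ} (ha : a ≤ n) (hb : b ≤ n)
    (h : (a : ZMod (n + 1)) = (b : ZMod (n + 1))) : a = b := by
  have := congrArg ZMod.val h
  rwa [ZMod.val_cast_of_lt (by omega), ZMod.val_cast_of_lt (by omega)] at this

lemma mem_image_cast {n : ℕ} {occ : Finset ℕ} (hocc : ∀ q ∈ occ, 1 ≤ q ∧ q ≤ n)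
    {a : ℕ} (ha : a ≤ n) :
    ((a : ZMod (n + 1)) ∈ occ.image (Nat.cast)) ↔ a ∈ occ := by
  simp only [Finset.mem_image]
  constructor
  · rintro ⟨q, hq, hqa⟩
    rwa [cast_le_inj (hocc q hq).2 ha hqa] at hq
  · intro h; exact ⟨a, h, rfl⟩

lemma backwardCandidates_eq (k p : ℕ) :
    backwardCandidates k p = (List.range' 0 (min k (p - 1))).map (fun i => p - (i + 1)) := by
  unfold backwardCandidates
  rw [List.range_eq_range']
  rcases le_total k (p - 1) with h | h
  · rw [min_eq_left h, List.filter_eq_self.2]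
    intro a ha
    simp only [List.mem_map, List.mem_range'_1] at ha
    obtain ⟨i, hi, rfl⟩ := ha
    simp; omega
  · rw [min_eq_right h]
    have hk : k = (k - (p - 1)) + (p - 1) := by omega
    rw [hk, Nat.add_comm (k - (p - 1)) (p - 1), ← List.range'_append (s := 0) (m := p - 1) (n := k - (p - 1)) (step := 1), List.map_append, List.filter_append]
    rw [List.filter_eq_self.2, List.filter_eq_nil_iff.2, List.append_nil]
    · intro a ha
      simp only [List.mem_map, List.mem_range'_1] at ha
      obtain ⟨i, hi, rfl⟩ := ha
      simp; omega
    · intro a ha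
      simp only [List.mem_map, List.mem_range'_1] at ha
      obtain ⟨i, hi, rfl⟩ := ha
      simp; omega

lemma circSpot_of_mem (n k : ℕ) (occ : Finset (ZMod (n + 1))) (p : ZMod (n + 1))
    (hp : p ∈ occ) :
    circSpot n k occ p =
      (((List.range' 0 k).map fun i => p - ((i + 1 : ℕ) : ZMod (n + 1))).find?
          (fun s => decide (s ∉ occ))).or
        (((List.range' 0 n).map fun i => p + ((i + 1 : ℕ) : ZMod (n + 1))).find?
          (fun s => decide (s ∉ occ))) := by
  rw [circSpot, circList, List.find?_cons_of_neg (by simp [hp]), List.find?_append]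

lemma keyD (n k : ℕ) : ∀ (l : List ℕ) (occ : Finset ℕ),
    (∀ p ∈ l, 1 ≤ p ∧ p ≤ n) → (∀ q ∈ occ, 1 ≤ q ∧ q ≤ n) →
    ((naplesContainedAux n k l occ = true) ↔
      (0 : ZMod (n + 1)) ∉ circRun n k (l.map Nat.cast) (occ.image Nat.cast)) := by
  intro l
  induction l with
  | nil =>
    intro occ _ hocc
    simp only [naplesContainedAux, List.map_nil, circRun, true_iff]
    intro h0
    rw [show ((0 : ZMod (n + 1)) = ((0 : ℕ) : ZMod (n + 1))) from by simp,
      mem_image_cast hocc (by omega)] at h0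
    exact absurd ((hocc 0 h0).1) (by omega)
  | cons p rest ih =>
    intro occ hl hocc
    obtain ⟨hp1, hpn⟩ := hl p (List.mem_cons_self)
    have hrest : ∀ q ∈ rest, 1 ≤ q ∧ q ≤ n := fun q hq => hl q (List.mem_cons_of_mem _ hq)
    have hmem : ∀ q : ℕ, q ≤ n → (((q : ZMod (n + 1)) ∈ occ.image Nat.cast) ↔ q ∈ occ) :=
      fun q hq => mem_image_cast hocc hq
    have h0Z : (0 : ZMod (n + 1)) ∉ occ.image Nat.cast := by
      rw [show ((0 : ZMod (n + 1)) = ((0 : ℕ) : ZMod (n + 1))) from by simp,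
        mem_image_cast hocc (by omega)]
      intro h; exact absurd (hocc 0 h).1 (by omega)
    by_cases hfail : p ≤ k ∧ Finset.Icc 1 p ⊆ occ
    · -- both sides fail
      have hdec : decide (p ≤ k → ¬ Finset.Icc 1 p ⊆ occ) = false :=
        decide_eq_false (fun himp => himp hfail.1 hfail.2)
      have hpocc : p ∈ occ := hfail.2 (Finset.mem_Icc.mpr ⟨hp1, le_rfl⟩)
      have hspot : circSpot n k (occ.image Nat.cast) ((p : ℕ) : ZMod (n + 1)) = some 0 := by
        rw [circSpot_of_mem n k _ _ (by rw [hmem p hpn]; exact hpocc)]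
        rw [find?_map_range'_some' _ _ k 0 (p - 1) (0 : ZMod (n + 1)) (by omega) (by omega)
          ?_ (by simp [h0Z]) ?_]
        · rfl
        · rw [show p - 1 + 1 = p from by omega, sub_self]
        · intro i _ hij
          rw [show ((p : ℕ) : ZMod (n + 1)) - ((i + 1 : ℕ) : ZMod (n + 1))
              = ((p - (i + 1) : ℕ) : ZMod (n + 1)) from (Nat.cast_sub (by omega)).symm]
          have hio : p - (i + 1) ∈ occ :=
            hfail.2 (Finset.mem_Icc.mpr ⟨by omega, by omega⟩)
          simp [hmem _ (show p - (i + 1) ≤ n by omega), hio]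
      refine iff_of_false (by simp [naplesContainedAux, hdec]) ?_
      intro h0
      apply h0
      rw [List.map_cons, circRun, hspot]
      exact zero_mem_circRun n k _ _ (Or.inr (Finset.mem_insert_self _ _))
    · -- containment holds at this step
      have hdec : decide (p ≤ k → ¬ Finset.Icc 1 p ⊆ occ) = true :=
        decide_eq_true (fun h1 h2 => hfail ⟨h1, h2⟩)
      by_cases hpo : p ∈ occ
      · cases hb : (backwardCandidates k p).find? (fun s => decide (s ∉ occ)) with
        | some s =>
          have hb' := hb
          rw [backwardCandidates_eq] at hb'
          obtain ⟨j, _, hjlt, hgj, hps, hmin⟩ := find?_map_range'_inv _ _ _ _ hb'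
          have hsocc : s ∉ occ := by simpa using hps
          have hs1 : 1 ≤ s := by omega
          have hsn : s ≤ n := by omega
          have hnsp : naplesSpot n k occ p = some s := by
            rw [naplesSpot, if_pos hpo, hb]
          have hcsp : circSpot n k (occ.image Nat.cast) ((p : ℕ) : ZMod (n + 1))
              = some ((s : ℕ) : ZMod (n + 1)) := by
            rw [circSpot_of_mem n k _ _ (by rw [hmem p hpn]; exact hpo)]
            rw [find?_map_range'_some' _ _ k 0 j ((s : ℕ) : ZMod (n + 1)) (by omega) (by omega)
              ?_ (by simp [hmem s hsn, hsocc]) ?_]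
            · rfl
            · rw [show ((p : ℕ) : ZMod (n + 1)) - ((j + 1 : ℕ) : ZMod (n + 1))
                = ((p - (j + 1) : ℕ) : ZMod (n + 1)) from (Nat.cast_sub (by omega)).symm, hgj]
            · intro i _ hij
              rw [show ((p : ℕ) : ZMod (n + 1)) - ((i + 1 : ℕ) : ZMod (n + 1))
                  = ((p - (i + 1) : ℕ) : ZMod (n + 1)) from (Nat.cast_sub (by omega)).symm]
              have hio : p - (i + 1) ∈ occ := by simpa using hmin i (by omega) hij
              simp [hmem _ (show p - (i + 1) ≤ n by omega), hio]
          have hL : naplesContainedAux n k (p :: rest) occ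
              = naplesContainedAux n k rest (insert s occ) := by
            simp only [naplesContainedAux, hnsp, hdec, Bool.true_and]
          have hR : circRun n k ((p :: rest).map Nat.cast) (occ.image Nat.cast)
              = circRun n k (rest.map Nat.cast) ((insert s occ).image Nat.cast) := by
            rw [List.map_cons, circRun, hcsp, Finset.image_insert]
          rw [hL, hR]
          exact ih (insert s occ) hrest (fun q hq => by
            rcases Finset.mem_insert.mp hq with rfl | hq
            · exact ⟨hs1, hsn⟩
            · exact hocc q hq)
        | none =>
          have hbmem : ∀ i, i < min k (p - 1) → p - (i + 1) ∈ occ := by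
            have hb' := hb
            rw [backwardCandidates_eq, List.find?_eq_none] at hb'
            intro i hi
            have := hb' (p - (i + 1)) (by
              simp only [List.mem_map, List.mem_range'_1]
              exact ⟨i, by omega, rfl⟩)
            simpa using this
          have hkp : k < p := by
            by_contra hkp
            push_neg at hkp
            have hni : ¬ Finset.Icc 1 p ⊆ occ := fun hsub => hfail ⟨hkp, hsub⟩
            obtain ⟨x, hx, hxo⟩ := Finset.not_subset.mp hni
            rw [Finset.mem_Icc] at hx
            have hxp : x ≠ p := fun h => hxo (h ▸ hpo)
            apply hxo
            have := hbmem (p - x - 1) (by omega)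
            rwa [show p - (p - x - 1 + 1) = x from by omega] at this
          have hBnone : ((List.range' 0 k).map fun i =>
              ((p : ℕ) : ZMod (n + 1)) - ((i + 1 : ℕ) : ZMod (n + 1))).find?
                (fun s => decide (s ∉ occ.image Nat.cast)) = none := by
            apply find?_map_range'_none
            intro j _ hj
            rw [show ((p : ℕ) : ZMod (n + 1)) - ((j + 1 : ℕ) : ZMod (n + 1))
                = ((p - (j + 1) : ℕ) : ZMod (n + 1)) from (Nat.cast_sub (by omega)).symm]
            simp [hmem _ (show p - (j + 1) ≤ n by omega), hbmem j (by omega)]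
          cases hf : forwardSpot n occ p with
          | some s =>
            have hnsp : naplesSpot n k occ p = some s := by
              rw [naplesSpot, if_pos hpo, hb, hf]
            have hf' := hf
            rw [forwardSpot, List.range'_eq_map_range, List.range_eq_range'] at hf'
            obtain ⟨j, _, hjlt, hgj, hps, hmin⟩ := find?_map_range'_inv _ _ _ _ hf'
            have hsocc : s ∉ occ := by simpa using hps
            have hj0 : j ≠ 0 := by
              rintro rfl
              rw [Nat.add_zero] at hgj
              exact hsocc (hgj ▸ hpo)
            have hsn : s ≤ n := by omega
            have hs1 : 1 ≤ s := by omega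
            have hcsp : circSpot n k (occ.image Nat.cast) ((p : ℕ) : ZMod (n + 1))
                = some ((s : ℕ) : ZMod (n + 1)) := by
              rw [circSpot_of_mem n k _ _ (by rw [hmem p hpn]; exact hpo), hBnone,
                Option.none_or]
              apply find?_map_range'_some' _ _ n 0 (j - 1) _ (by omega) (by omega)
                ?_ (by simp [hmem s hsn, hsocc]) ?_
              · rw [show ((p : ℕ) : ZMod (n + 1)) + ((j - 1 + 1 : ℕ) : ZMod (n + 1))
                    = ((p + (j - 1 + 1) : ℕ) : ZMod (n + 1)) from (Nat.cast_add _ _).symm,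
                  show p + (j - 1 + 1) = p + j from by omega, hgj]
              · intro i _ hij
                have hio : p + (i + 1) ∈ occ := by
                  simpa using hmin (i + 1) (by omega) (by omega)
                rw [show ((p : ℕ) : ZMod (n + 1)) + ((i + 1 : ℕ) : ZMod (n + 1))
                    = ((p + (i + 1) : ℕ) : ZMod (n + 1)) from (Nat.cast_add _ _).symm]
                exact decide_eq_false
                  (not_not_intro ((hmem _ (show p + (i + 1) ≤ n by omega)).mpr hio))
            have hL : naplesContainedAux n k (p :: rest) occ
                = naplesContainedAux n k rest (insert s occ) := by
              simp only [naplesContainedAux, hnsp, hdec, Bool.true_and]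
            have hR : circRun n k ((p :: rest).map Nat.cast) (occ.image Nat.cast)
                = circRun n k (rest.map Nat.cast) ((insert s occ).image Nat.cast) := by
              rw [List.map_cons, circRun, hcsp, Finset.image_insert]
            rw [hL, hR]
            exact ih (insert s occ) hrest (fun q hq => by
              rcases Finset.mem_insert.mp hq with rfl | hq
              · exact ⟨hs1, hsn⟩
              · exact hocc q hq)
          | none =>
            have hnsp : naplesSpot n k occ p = none := by
              rw [naplesSpot, if_pos hpo, hb, hf]
            have hfall : ∀ x, p ≤ x → x ≤ n → x ∈ occ := by
              rw [forwardSpot, List.find?_eq_none] at hf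
              intro x hx1 hx2
              have := hf x (by rw [List.mem_range'_1]; omega)
              simpa using this
            have hspot : circSpot n k (occ.image Nat.cast) ((p : ℕ) : ZMod (n + 1))
                = some 0 := by
              rw [circSpot_of_mem n k _ _ (by rw [hmem p hpn]; exact hpo), hBnone,
                Option.none_or]
              apply find?_map_range'_some' _ _ n 0 (n - p) (0 : ZMod (n + 1))
                (by omega) (by omega) ?_ (by simp [h0Z]) ?_
              · rw [show ((p : ℕ) : ZMod (n + 1)) + ((n - p + 1 : ℕ) : ZMod (n + 1))
                    = ((p + (n - p + 1) : ℕ) : ZMod (n + 1)) from (Nat.cast_add _ _).symm,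
                  show p + (n - p + 1) = n + 1 from by omega]
                exact ZMod.natCast_self _
              · intro i _ hij
                rw [show ((p : ℕ) : ZMod (n + 1)) + ((i + 1 : ℕ) : ZMod (n + 1))
                    = ((p + (i + 1) : ℕ) : ZMod (n + 1)) from (Nat.cast_add _ _).symm]
                exact decide_eq_false (not_not_intro ((hmem _ (show p + (i + 1) ≤ n by omega)).mpr
                  (hfall (p + (i + 1)) (by omega) (by omega))))
            refine iff_of_false (by simp [naplesContainedAux, hnsp]) ?_
            intro h0
            apply h0
            rw [List.map_cons, circRun, hspot]
            exact zero_mem_circRun n k _ _ (Or.inr (Finset.mem_insert_self _ _))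
      · -- spot free
        have hnsp : naplesSpot n k occ p = some p := by rw [naplesSpot, if_neg hpo]
        have hcsp : circSpot n k (occ.image Nat.cast) ((p : ℕ) : ZMod (n + 1))
            = some ((p : ℕ) : ZMod (n + 1)) := by
          rw [circSpot, circList]
          exact List.find?_cons_of_pos (by simp [(hmem p hpn), hpo])
        have hL : naplesContainedAux n k (p :: rest) occ
            = naplesContainedAux n k rest (insert p occ) := by
          simp only [naplesContainedAux, hnsp, hdec, Bool.true_and]
        have hR : circRun n k ((p :: rest).map Nat.cast) (occ.image Nat.cast)
            = circRun n k (rest.map Nat.cast) ((insert p occ).image Nat.cast) := by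
          rw [List.map_cons, circRun, hcsp, Finset.image_insert]
        rw [hL, hR]
        exact ih (insert p occ) hrest (fun q hq => by
          rcases Finset.mem_insert.mp hq with rfl | hq
          · exact ⟨hp1, hpn⟩
          · exact hocc q hq)
/-! ### part 3 : counting via Pollak's rotation argument -/

def circGood (m n k : ℕ) : Finset (Fin m → ZMod (n + 1)) :=
  Finset.univ.filter fun f => (0 : ZMod (n + 1)) ∉ circRun n k (List.ofFn f) ∅

lemma circRun_ofFn_shift (n k m : ℕ) (c : ZMod (n + 1)) (f : Fin m → ZMod (n + 1)) :
    circRun n k (List.ofFn (fun i => f i + c)) ∅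
      = (circRun n k (List.ofFn f) ∅).image (· + c) := by
  have h1 : List.ofFn (fun i => f i + c) = (List.ofFn f).map (· + c) :=
    (List.map_ofFn (f := f) (g := (· + c))).symm
  have h2 := circRun_shift n k (List.ofFn f) ∅ c
  rw [Finset.image_empty] at h2
  rw [h1, h2]

lemma circGood_card_mul (m n k : ℕ) (hmn : m ≤ n) :
    (circGood m n k).card * (n + 1) = (n + 1 - m) * (n + 1) ^ m := by
  have hcount : ∀ f : Fin m → ZMod (n + 1),
      (Finset.univ.filter fun c => c ∉ circRun n k (List.ofFn f) ∅).card = n + 1 - m := by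
    intro f
    have hE : (circRun n k (List.ofFn f) ∅).card = m := by
      have := circRun_card n k (List.ofFn f) ∅ (by simp; omega)
      simpa using this
    have hcompl : (Finset.univ.filter fun c => c ∉ circRun n k (List.ofFn f) ∅)
        = (circRun n k (List.ofFn f) ∅)ᶜ := by
      ext x; simp
    rw [hcompl, Finset.card_compl, hE, ZMod.card]
  have e1 : (∑ f : Fin m → ZMod (n + 1), ∑ c : ZMod (n + 1),
      (if c ∉ circRun n k (List.ofFn f) ∅ then 1 else 0)) = (n + 1) ^ m * (n + 1 - m) := by
    have hval : ∀ f : Fin m → ZMod (n + 1), (∑ c : ZMod (n + 1),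
        (if c ∉ circRun n k (List.ofFn f) ∅ then 1 else 0)) = n + 1 - m := by
      intro f
      rw [← Finset.card_filter]
      exact hcount f
    rw [Finset.sum_congr rfl (fun f _ => hval f), Finset.sum_const, smul_eq_mul,
      Finset.card_univ, Fintype.card_fun, ZMod.card, Fintype.card_fin]
  have e2 : (∑ f : Fin m → ZMod (n + 1), ∑ c : ZMod (n + 1),
      (if c ∉ circRun n k (List.ofFn f) ∅ then 1 else 0))
      = (n + 1) * (circGood m n k).card := by
    rw [Finset.sum_comm]
    have hc : ∀ c : ZMod (n + 1), (∑ f : Fin m → ZMod (n + 1),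
        (if c ∉ circRun n k (List.ofFn f) ∅ then 1 else 0)) = (circGood m n k).card := by
      intro c
      have hcard : (circGood m n k).card = ∑ g : Fin m → ZMod (n + 1),
          (if (0 : ZMod (n + 1)) ∉ circRun n k (List.ofFn g) ∅ then 1 else 0) := by
        rw [circGood, Finset.card_filter]
      rw [hcard]
      symm
      apply Fintype.sum_bijective (fun g : Fin m → ZMod (n + 1) => fun i => g i + c)
      · exact (Equiv.arrowCongr (Equiv.refl _) (Equiv.addRight c)).bijective
      · intro g
        have hcond : (c ∉ circRun n k (List.ofFn fun i => g i + c) ∅)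
            ↔ ((0 : ZMod (n + 1)) ∉ circRun n k (List.ofFn g) ∅) := by
          rw [circRun_ofFn_shift]
          simp [Finset.mem_image]
        simp only [hcond]
    rw [Finset.sum_congr rfl (fun c _ => hc c), Finset.sum_const, smul_eq_mul,
      Finset.card_univ, ZMod.card]
  calc (circGood m n k).card * (n + 1) = (n + 1) * (circGood m n k).card := mul_comm _ _
    _ = (n + 1) ^ m * (n + 1 - m) := by rw [← e2, e1]
    _ = (n + 1 - m) * (n + 1) ^ m := mul_comm _ _

lemma circGood_card (m n k : ℕ) (hm : 1 ≤ m) (hmn : m ≤ n) :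
    (circGood m n k).card = (n + 1 - m) * (n + 1) ^ (m - 1) := by
  have h := circGood_card_mul m n k hmn
  have hr : (n + 1 - m) * (n + 1) ^ m = ((n + 1 - m) * (n + 1) ^ (m - 1)) * (n + 1) := by
    rw [mul_assoc, ← pow_succ, show m - 1 + 1 = m from by omega]
  rw [hr] at h
  exact Nat.eq_of_mul_eq_mul_right (by omega) h

/-! ### relating `Bset` to `circGood` -/

lemma flatMap_single {α β : Type*} (f : α → β) (l : List α) :
    (l.flatMap fun x => [f x]) = l.map f := by
  induction l <;> simp_all

lemma prefList_ofFn {m n : ℕ} (a : Fin m → Fin n) :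
    prefList a = List.ofFn (fun i => (a i : ℕ) + 1) := by
  unfold prefList
  rw [show (↑(List.ofFn a) : List ℕ) = (List.ofFn a).flatMap (fun x : Fin n => [(x : ℕ)]) from rfl]
  rw [flatMap_single, List.map_map, List.map_ofFn]
  rfl

lemma prefList_bounds {m n : ℕ} (a : Fin m → Fin n) :
    ∀ p ∈ prefList a, 1 ≤ p ∧ p ≤ n := by
  intro p hp
  rw [prefList_ofFn] at hp
  rw [List.mem_ofFn] at hp
  obtain ⟨i, rfl⟩ := hp
  show 1 ≤ (a i : ℕ) + 1 ∧ (a i : ℕ) + 1 ≤ n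
  exact ⟨by omega, by have := (a i).isLt; omega⟩

lemma mem_Bset_iff {m n : ℕ} (k : ℕ) (a : Fin m → Fin n) :
    a ∈ Bset m n k ↔ (0 : ZMod (n + 1)) ∉
      circRun n k (List.ofFn fun i => (((a i : ℕ) + 1 : ℕ) : ZMod (n + 1))) ∅ := by
  rw [Bset, Finset.mem_filter]
  have hlist : (prefList a).map (Nat.cast : ℕ → ZMod (n + 1))
      = List.ofFn fun i => (((a i : ℕ) + 1 : ℕ) : ZMod (n + 1)) := by
    rw [prefList_ofFn, List.map_ofFn]
    rfl
  have hkey := keyD n k (prefList a) ∅ (prefList_bounds a) (by simp)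
  rw [hlist, Finset.image_empty] at hkey
  constructor
  · intro h; exact hkey.mp h.2
  · intro h; exact ⟨Finset.mem_univ _, hkey.mpr h⟩

lemma Bset_card_eq (m n k : ℕ) : (Bset m n k).card = (circGood m n k).card := by
  apply Finset.card_bij (fun a _ => fun i => (((a i : ℕ) + 1 : ℕ) : ZMod (n + 1)))
  · intro a ha
    rw [circGood, Finset.mem_filter]
    exact ⟨Finset.mem_univ _, (mem_Bset_iff k a).mp ha⟩
  · intro a ha b hb h
    funext i
    have hi := congrFun h i
    have hab : (a i : ℕ) + 1 = (b i : ℕ) + 1 :=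
      cast_le_inj (by have := (a i).isLt; omega) (by have := (b i).isLt; omega) hi
    exact Fin.ext (by omega)
  · intro f hf
    rw [circGood, Finset.mem_filter] at hf
    have hf0 : ∀ i, f i ≠ 0 := by
      intro i h0
      apply hf.2
      apply zero_mem_circRun
      left
      rw [List.mem_ofFn]
      exact ⟨i, h0⟩
    have hval : ∀ i, 1 ≤ (f i).val ∧ (f i).val ≤ n := by
      intro i
      have h1 := ZMod.val_lt (f i)
      have h2 : (f i).val ≠ 0 := fun h => hf0 i ((ZMod.val_eq_zero _).mp h)
      omega
    refine ⟨fun i => ⟨(f i).val - 1, by have := hval i; omega⟩, ?_, ?_⟩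
    · rw [mem_Bset_iff]
      have hfa : (List.ofFn fun i =>
          ((((⟨(f i).val - 1, by have := hval i; omega⟩ : Fin n) : ℕ) + 1 : ℕ) : ZMod (n + 1)))
          = List.ofFn f := by
        apply congrArg
        funext i
        show ((((f i).val - 1) + 1 : ℕ) : ZMod (n + 1)) = f i
        rw [show (f i).val - 1 + 1 = (f i).val from by have := hval i; omega]
        exact ZMod.natCast_rightInverse _
      rw [hfa]
      exact hf.2
    · funext i
      show ((((f i).val - 1) + 1 : ℕ) : ZMod (n + 1)) = f i
      rw [show (f i).val - 1 + 1 = (f i).val from by have := hval i; omega]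
      exact ZMod.natCast_rightInverse _

/-! ### classical parking functions are the contained 0-Naples ones -/

lemma classical_eq_naples0 (n : ℕ) : ∀ (l : List ℕ), (∀ p ∈ l, 1 ≤ p ∧ p ≤ n) → ∀ occ,
    naplesContainedAux n 0 l occ = (classicalPark n l occ).isSome := by
  intro l
  induction l with
  | nil => intro _ occ; simp [naplesContainedAux, classicalPark]
  | cons p rest ih =>
    intro hl occ
    obtain ⟨hp1, hpn⟩ := hl p (List.mem_cons_self)
    have hdec : decide (p ≤ 0 → ¬ Finset.Icc 1 p ⊆ occ) = true :=
      decide_eq_true (fun h => absurd h (by omega))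
    have hspot : naplesSpot n 0 occ p = forwardSpot n occ p := by
      rw [naplesSpot]
      by_cases hpo : p ∈ occ
      · rw [if_pos hpo]
        have hbc : backwardCandidates 0 p = [] := by simp [backwardCandidates]
        rw [hbc]
        rfl
      · rw [if_neg hpo]
        symm
        rw [forwardSpot, show n + 1 - p = (n - p) + 1 from by omega, List.range'_succ]
        exact List.find?_cons_of_pos (by simp [hpo])
    simp only [naplesContainedAux, classicalPark, hspot, hdec, Bool.true_and]
    cases hf : forwardSpot n occ p with
    | none => rfl
    | some s =>
      exact ih (fun q hq => hl q (List.mem_cons_of_mem _ hq)) (insert s occ)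

lemma PFset_eq_Bset0 (m n : ℕ) : PFset m n = Bset m n 0 := by
  ext a
  rw [PFset, Bset, Finset.mem_filter, Finset.mem_filter,
    classical_eq_naples0 n (prefList a) (prefList_bounds a) ∅]

theorem contained_bijection (m n k : ℕ) (hm : 1 ≤ m) (hmn : m ≤ n) (hk : k ≤ n - 1) :
    Nonempty ({a // a ∈ Bset m n k} ≃ {a // a ∈ PFset m n}) ∧
      (Bset m n k).card = (n - m + 1) * (n + 1) ^ (m - 1) := by
  have hcard : ∀ k' : ℕ, (Bset m n k').card = (n - m + 1) * (n + 1) ^ (m - 1) := by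
    intro k'
    rw [Bset_card_eq m n k', circGood_card m n k' hm hmn,
      show n + 1 - m = n - m + 1 from by omega]
  have hPF : (PFset m n).card = (n - m + 1) * (n + 1) ^ (m - 1) := by
    rw [PFset_eq_Bset0]; exact hcard 0
  exact ⟨⟨Finset.equivOfCardEq (by rw [hcard k, hPF])⟩, hcard k⟩
end

section
/- For all n ≥ 1 and 0 ≤ k ≤ n-1, the number of contained k-Naples (n,n)-parking functions equals (n+1)^{n-1}, independent of k. -/
namespace CN

/-- Circular candidate list: `p`, then `k` backward steps, then forward around. -/
def circCands (n k : ℕ) (p : ZMod (n+1)) : List (ZMod (n+1)) :=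
  p :: (((List.range k).map fun i => p - ((i + 1 : ℕ) : ZMod (n+1))) ++
        ((List.range n).map fun i => p + ((i + 1 : ℕ) : ZMod (n+1))))

def cspot (n k : ℕ) (occ : Finset (ZMod (n+1))) (p : ZMod (n+1)) : ZMod (n+1) :=
  ((circCands n k p).find? (fun s => decide (s ∉ occ))).getD p

def cpark (n k : ℕ) : List (ZMod (n+1)) → Finset (ZMod (n+1)) → Finset (ZMod (n+1))
  | [], occ => occ
  | p :: rest, occ => cpark n k rest (insert (cspot n k occ p) occ)

theorem find?_prefix {α : Type*} (P : α → Bool) :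
    ∀ (l₁ : List α) (c : α) (l₂ : List α), (∀ x ∈ l₁, P x = false) → P c = true →
      List.find? P (l₁ ++ c :: l₂) = some c := by
  intro l₁ c l₂ h hc
  induction l₁ with
  | nil => simp [List.find?, hc]
  | cons a t ih =>
      have ha := h a (by simp)
      simp only [List.cons_append, List.find?, ha]
      exact ih (fun x hx => h x (by simp [hx]))

theorem find?_split {α : Type*} {P : α → Bool} :
    ∀ {l : List α} {c : α}, List.find? P l = some c →
      ∃ l₁ l₂, l = l₁ ++ c :: l₂ ∧ (∀ x ∈ l₁, P x = false) := by
  intro l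
  induction l with
  | nil => intro c h; simp [List.find?] at h
  | cons a t ih =>
      intro c h
      by_cases hPa : P a = true
      · rw [List.find?_cons_of_pos hPa] at h
        obtain rfl := Option.some.inj h
        exact ⟨[], t, rfl, by simp⟩
      · have hPa' : P a = false := by simpa using hPa
        rw [List.find?_cons_of_neg (by simp [hPa'])] at h
        obtain ⟨l₁, l₂, rfl, hall⟩ := ih h
        exact ⟨a :: l₁, l₂, rfl, by
          intro x hx
          rcases List.mem_cons.mp hx with rfl | hx
          · exact hPa'
          · exact hall x hx⟩

theorem cast_inj {n x y : ℕ} (hx : x < n + 1) (hy : y < n + 1)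
    (h : (x : ZMod (n+1)) = y) : x = y := by
  have := congrArg ZMod.val h
  rwa [ZMod.val_natCast_of_lt hx, ZMod.val_natCast_of_lt hy] at this

theorem mem_image_cast {n x : ℕ} {occ : Finset ℕ} (hocc : occ ⊆ Finset.Icc 1 n)
    (hx : x ≤ n) :
    ((x : ℕ) : ZMod (n+1)) ∈ occ.image (Nat.cast : ℕ → ZMod (n+1)) ↔ x ∈ occ := by
  constructor
  · intro h
    obtain ⟨y, hy, hxy⟩ := Finset.mem_image.mp h
    have hy' := Finset.mem_Icc.mp (hocc hy)
    have : y = x := cast_inj (n := n) (by omega) (by omega) hxy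
    rwa [this] at hy
  · exact fun h => Finset.mem_image_of_mem _ h

theorem zero_not_mem_image {n : ℕ} {occ : Finset ℕ} (hocc : occ ⊆ Finset.Icc 1 n) :
    (0 : ZMod (n+1)) ∉ occ.image (Nat.cast : ℕ → ZMod (n+1)) := by
  intro h
  obtain ⟨y, hy, hxy⟩ := Finset.mem_image.mp h
  have hy' := Finset.mem_Icc.mp (hocc hy)
  have : y = 0 := cast_inj (n := n) (by omega) (by omega) (by simpa using hxy)
  omega

theorem cpark_mono {n k : ℕ} : ∀ (l : List (ZMod (n+1))) (occ : Finset (ZMod (n+1))),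
    occ ⊆ cpark n k l occ := by
  intro l
  induction l with
  | nil => intro occ; exact Finset.Subset.refl _
  | cons p rest ih =>
      intro occ
      show occ ⊆ cpark n k rest (insert (cspot n k occ p) occ)
      exact Finset.Subset.trans (Finset.subset_insert _ _) (ih _)

end CN

namespace CN

def linCands (n k p : ℕ) : List ℕ :=
  p :: (backwardCandidates k p ++ List.range' p (n + 1 - p))

theorem naplesSpot_eq_find? (n k : ℕ) (occ : Finset ℕ) (p : ℕ) :
    naplesSpot n k occ p = (linCands n k p).find? (fun s => decide (s ∉ occ)) := by
  unfold naplesSpot linCands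
  by_cases hmem : p ∈ occ
  · simp only [hmem, if_true]
    rw [List.find?_cons_of_neg (by simp [hmem]), List.find?_append]
    cases hfind : (backwardCandidates k p).find? (fun s => decide (s ∉ occ)) with
    | none => simp [hfind, forwardSpot]
    | some s => simp [hfind]
  · simp only [hmem, if_false]
    rw [List.find?_cons_of_pos (by simp [hmem])]

theorem bwd_lin_big {k p : ℕ} (hkp : k < p) :
    backwardCandidates k p = (List.range k).map (fun i => p - (i+1)) := by
  unfold backwardCandidates
  apply List.filter_eq_self.mpr
  intro a ha
  obtain ⟨i, hi, rfl⟩ := List.mem_map.mp ha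
  have := List.mem_range.mp hi
  simp only [decide_eq_true_eq]
  omega

theorem bwd_circ_big {n k p : ℕ} (hkp : k < p) :
    ((List.range k).map fun i => ((p:ℕ) : ZMod (n+1)) - ((i+1 : ℕ) : ZMod (n+1)))
      = (backwardCandidates k p).map (Nat.cast : ℕ → ZMod (n+1)) := by
  rw [bwd_lin_big hkp, List.map_map]
  apply List.map_congr_left
  intro i hi
  have hi' : i < k := List.mem_range.mp hi
  show (p : ZMod (n+1)) - ((i+1:ℕ) : ZMod (n+1)) = ((p - (i+1) : ℕ) : ZMod (n+1))
  rw [Nat.cast_sub (by omega)]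

theorem bwd_lin_small {k p : ℕ} (hp : 1 ≤ p) (hpk : p ≤ k) :
    backwardCandidates k p = (List.range (p-1)).map (fun i => p - (i+1)) := by
  unfold backwardCandidates
  have h : k = (p-1) + (k - (p-1)) := by omega
  rw [h, List.range_add, List.map_append, List.filter_append]
  have h1 : ((List.range (p-1)).map (fun i => p - (i+1))).filter (fun s => decide (1 ≤ s))
      = (List.range (p-1)).map (fun i => p - (i+1)) := by
    apply List.filter_eq_self.mpr
    intro a ha
    obtain ⟨i, hi, rfl⟩ := List.mem_map.mp ha
    have := List.mem_range.mp hi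
    simp only [decide_eq_true_eq]
    omega
  have h2 : (((List.range (k-(p-1))).map (fun x => (p-1) + x)).map (fun i => p - (i+1))).filter
      (fun s => decide (1 ≤ s)) = [] := by
    apply List.filter_eq_nil_iff.mpr
    intro a ha
    obtain ⟨i, hi, rfl⟩ := List.mem_map.mp ha
    obtain ⟨j, hj, rfl⟩ := List.mem_map.mp hi
    simp only [decide_eq_true_eq]
    omega
  rw [h1, h2, List.append_nil]

theorem bwd_circ_small {n k p : ℕ} (hp : 1 ≤ p) (hpk : p ≤ k) :
    ∃ junk, ((List.range k).map fun i => ((p:ℕ) : ZMod (n+1)) - ((i+1:ℕ) : ZMod (n+1)))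
      = (backwardCandidates k p).map (Nat.cast : ℕ → ZMod (n+1)) ++ (0 : ZMod (n+1)) :: junk := by
  have h : k = (p-1) + ((k - p) + 1) := by omega
  refine ⟨((List.range (k-p)).map (fun x => (p-1) + Nat.succ x)).map
    (fun i => ((p:ℕ) : ZMod (n+1)) - ((i+1:ℕ) : ZMod (n+1))), ?_⟩
  conv_lhs => rw [h, List.range_add, List.map_append, List.range_succ_eq_map]
  rw [bwd_lin_small hp hpk]
  congr 1
  · rw [List.map_map]
    apply List.map_congr_left
    intro i hi
    have hi' : i < p - 1 := List.mem_range.mp hi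
    show (p : ZMod (n+1)) - ((i+1:ℕ) : ZMod (n+1)) = ((p - (i+1) : ℕ) : ZMod (n+1))
    rw [Nat.cast_sub (by omega)]
  · simp only [List.map_cons, List.map_map]
    congr 1
    show (p : ZMod (n+1)) - (((p-1) + 0 + 1 : ℕ) : ZMod (n+1)) = 0
    have : (p-1) + 0 + 1 = p := by omega
    rw [this, sub_self]

theorem fwd_lin {n p : ℕ} (hp : 1 ≤ p) (hpn : p ≤ n) :
    List.range' p (n + 1 - p) = p :: List.range' (p+1) (n-p) := by
  have h : n + 1 - p = (n - p) + 1 := by omega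
  rw [h, List.range'_succ]

theorem fwd_circ {n p : ℕ} (hp : 1 ≤ p) (hpn : p ≤ n) :
    ∃ junk, ((List.range n).map fun i => ((p:ℕ) : ZMod (n+1)) + ((i+1:ℕ) : ZMod (n+1)))
      = (List.range' (p+1) (n-p)).map (Nat.cast : ℕ → ZMod (n+1)) ++ (0 : ZMod (n+1)) :: junk := by
  have h : n = (n-p) + ((p - 1) + 1) := by omega
  refine ⟨((List.range (p-1)).map (fun x => (n-p) + Nat.succ x)).map
    (fun i => ((p:ℕ) : ZMod (n+1)) + ((i+1:ℕ) : ZMod (n+1))), ?_⟩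
  have hr : List.range n = List.range (n-p) ++ (List.range ((p-1)+1)).map (fun x => (n-p) + x) := by
    conv_lhs => rw [h]
    rw [List.range_add]
  rw [hr, List.map_append, List.range_succ_eq_map]
  congr 1
  · rw [List.range'_eq_map_range, List.map_map]
    apply List.map_congr_left
    intro i hi
    have hi' : i < n - p := List.mem_range.mp hi
    show (p : ZMod (n+1)) + ((i+1:ℕ) : ZMod (n+1)) = (((p+1) + i : ℕ) : ZMod (n+1))
    push_cast
    ring
  · simp only [List.map_cons, List.map_map]
    congr 1
    show (p : ZMod (n+1)) + (((n-p) + 0 + 1 : ℕ) : ZMod (n+1)) = 0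
    have h2 : ((p : ℕ) : ZMod (n+1)) + (((n-p) + 0 + 1 : ℕ) : ZMod (n+1))
        = ((p + ((n-p) + 0 + 1) : ℕ) : ZMod (n+1)) := by push_cast; ring
    rw [h2]
    have : p + ((n-p) + 0 + 1) = n + 1 := by omega
    rw [this, ZMod.natCast_self]

end CN

namespace CN

theorem cspot_eq' {n k : ℕ} {occ : Finset (ZMod (n+1))} {p c : ZMod (n+1)}
    {l1 l2 : List (ZMod (n+1))} (h : circCands n k p = l1 ++ c :: l2)
    (h1 : ∀ x ∈ l1, x ∈ occ) (hc : c ∉ occ) :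
    cspot n k occ p = c := by
  unfold cspot
  rw [h, find?_prefix _ l1 c l2 (fun x hx => by simp [h1 x hx]) (by simp [hc])]
  rfl

theorem bwd_bounds {k p x : ℕ} (hx : x ∈ backwardCandidates k p) : 1 ≤ x ∧ x < p := by
  unfold backwardCandidates at hx
  have h1 := List.of_mem_filter hx
  have h2 := List.mem_of_mem_filter hx
  obtain ⟨i, hi, rfl⟩ := List.mem_map.mp h2
  simp only [decide_eq_true_eq] at h1
  omega

theorem mem_bwd_small {k p j : ℕ} (hpk : p ≤ k) (hj1 : 1 ≤ j) (hjp : j < p) :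
    j ∈ backwardCandidates k p := by
  rw [bwd_lin_small (by omega) hpk]
  exact List.mem_map.mpr ⟨p - j - 1, List.mem_range.mpr (by omega), by omega⟩

/-- Case: car parks (lin) at spot `s`; circular process picks `cast s`. -/
theorem cspot_eq_cast {n k : ℕ} {occ : Finset ℕ} {p s : ℕ}
    (hocc : occ ⊆ Finset.Icc 1 n) (hp : 1 ≤ p) (hpn : p ≤ n)
    (hok : p ≤ k → ¬ Finset.Icc 1 p ⊆ occ)
    (hs : naplesSpot n k occ p = some s) :
    cspot n k (occ.image Nat.cast) ((p : ℕ) : ZMod (n+1)) = ((s : ℕ) : ZMod (n+1)) := by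
  unfold naplesSpot at hs
  by_cases hmem : p ∈ occ
  · rw [if_pos hmem] at hs
    cases hfind : (backwardCandidates k p).find? (fun s => decide (s ∉ occ)) with
    | some t =>
        rw [hfind] at hs
        obtain rfl : s = t := (Option.some.inj hs).symm
        obtain ⟨L1, L2, hsplit, hall⟩ := find?_split hfind
        have hsocc : s ∉ occ := by
          have := List.find?_some hfind
          simpa using this
        have hsbound : 1 ≤ s ∧ s < p := bwd_bounds (hsplit ▸ (by simp : s ∈ L1 ++ s :: L2))
        have hL1 : ∀ x ∈ L1, x ∈ occ ∧ x ≤ n := by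
          intro x hx
          have hxb : x ∈ backwardCandidates k p := hsplit ▸ (by simp [hx])
          have := bwd_bounds hxb
          have h2 := hall x hx
          simp only [decide_eq_true_eq, Bool.not_eq_true, decide_eq_false_iff_not, not_not] at h2
          refine ⟨by simpa using h2, by omega⟩
        -- decompose circCands
        by_cases hpk : p ≤ k
        · obtain ⟨junk, hjunk⟩ := bwd_circ_small (n := n) hp hpk
          apply cspot_eq' (l1 := ((p:ℕ) : ZMod (n+1)) :: L1.map Nat.cast)
            (l2 := L2.map Nat.cast ++ ((0:ZMod (n+1)) :: junk ++
              ((List.range n).map fun i => ((p:ℕ) : ZMod (n+1)) + ((i+1:ℕ) : ZMod (n+1)))))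
          · unfold circCands
            rw [hjunk, hsplit]
            simp [List.append_assoc]
          · intro x hx
            rcases List.mem_cons.mp hx with rfl | hx
            · exact (mem_image_cast hocc hpn).mpr hmem
            · obtain ⟨y, hy, rfl⟩ := List.mem_map.mp hx
              exact (mem_image_cast hocc (hL1 y hy).2).mpr (hL1 y hy).1
          · exact fun h => hsocc ((mem_image_cast hocc (by omega)).mp h)
        · rw [bwd_lin_big (by omega)] at hsplit
          have hcirc := bwd_circ_big (n := n) (k := k) (p := p) (by omega)
          rw [bwd_lin_big (by omega)] at hcirc
          apply cspot_eq' (l1 := ((p:ℕ) : ZMod (n+1)) :: L1.map Nat.cast)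
            (l2 := L2.map Nat.cast ++
              ((List.range n).map fun i => ((p:ℕ) : ZMod (n+1)) + ((i+1:ℕ) : ZMod (n+1))))
          · unfold circCands
            rw [hcirc, hsplit]
            simp [List.append_assoc]
          · intro x hx
            rcases List.mem_cons.mp hx with rfl | hx
            · exact (mem_image_cast hocc hpn).mpr hmem
            · obtain ⟨y, hy, rfl⟩ := List.mem_map.mp hx
              exact (mem_image_cast hocc (hL1 y hy).2).mpr (hL1 y hy).1
          · exact fun h => hsocc ((mem_image_cast hocc (by omega)).mp h)
    | none =>
        rw [hfind] at hs
        -- backward failed; p > k (else contradiction with hok)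
        have hallbwd : ∀ x ∈ backwardCandidates k p, x ∈ occ := by
          intro x hx
          have := List.find?_eq_none.mp hfind x hx
          simpa using this
        have hpk : k < p := by
          by_contra hle
          push_neg at hle
          apply hok hle
          intro j hj
          have hj' := Finset.mem_Icc.mp hj
          by_cases hjp : j = p
          · exact hjp ▸ hmem
          · exact hallbwd j (mem_bwd_small hle (by omega) (by omega))
        -- forward search
        unfold forwardSpot at hs
        rw [fwd_lin hp hpn] at hs
        rw [List.find?_cons_of_neg (by simp [hmem])] at hs
        obtain ⟨R1, R2, hsplit, hall⟩ := find?_split hs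
        have hsocc : s ∉ occ := by
          have : s ∈ (List.range' (p+1) (n-p)) := hsplit ▸ (by simp)
          have hfound := hs
          have := List.find?_some hfound
          simpa using this
        have hsbound : p + 1 ≤ s ∧ s ≤ n := by
          have : s ∈ (List.range' (p+1) (n-p)) := hsplit ▸ (by simp)
          have := List.mem_range'_1.mp this
          omega
        have hR1 : ∀ x ∈ R1, x ∈ occ ∧ x ≤ n := by
          intro x hx
          have hxr : x ∈ List.range' (p+1) (n-p) := hsplit ▸ (by simp [hx])
          have hb := List.mem_range'_1.mp hxr
          have h2 := hall x hx
          simp only [decide_eq_true_eq, Bool.not_eq_true, decide_eq_false_iff_not, not_not] at h2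
          exact ⟨by simpa using h2, by omega⟩
        obtain ⟨junk, hjunk⟩ := fwd_circ (n := n) hp hpn
        have hcirc := bwd_circ_big (n := n) (k := k) (p := p) hpk
        apply cspot_eq' (l1 := ((p:ℕ) : ZMod (n+1)) ::
            ((backwardCandidates k p).map Nat.cast ++ R1.map Nat.cast))
          (l2 := R2.map Nat.cast ++ (0:ZMod (n+1)) :: junk)
        · unfold circCands
          rw [hjunk, hcirc, hsplit]
          simp [List.append_assoc]
        · intro x hx
          rcases List.mem_cons.mp hx with rfl | hx
          · exact (mem_image_cast hocc hpn).mpr hmem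
          · rcases List.mem_append.mp hx with hx | hx
            · obtain ⟨y, hy, rfl⟩ := List.mem_map.mp hx
              have hb := bwd_bounds hy
              exact (mem_image_cast hocc (by omega)).mpr (hallbwd y hy)
            · obtain ⟨y, hy, rfl⟩ := List.mem_map.mp hx
              exact (mem_image_cast hocc (hR1 y hy).2).mpr (hR1 y hy).1
        · exact fun h => hsocc ((mem_image_cast hocc (by omega)).mp h)
  · rw [if_neg hmem] at hs
    obtain rfl : p = s := Option.some.inj hs
    apply cspot_eq' (l1 := []) (l2 := ((List.range k).map fun i => ((p:ℕ) : ZMod (n+1)) - ((i+1:ℕ) : ZMod (n+1))) ++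
      ((List.range n).map fun i => ((p:ℕ) : ZMod (n+1)) + ((i+1:ℕ) : ZMod (n+1))))
    · rfl
    · intro x hx; simp at hx
    · exact fun h => hmem ((mem_image_cast hocc hpn).mp h)

end CN

namespace CN

theorem cspot_eq_zero_of_blocked {n k : ℕ} {occ : Finset ℕ} {p : ℕ}
    (hocc : occ ⊆ Finset.Icc 1 n) (hp : 1 ≤ p) (hpn : p ≤ n) (hpk : p ≤ k)
    (hblock : Finset.Icc 1 p ⊆ occ) :
    cspot n k (occ.image Nat.cast) ((p : ℕ) : ZMod (n+1)) = 0 := by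
  have hmem : p ∈ occ := hblock (Finset.mem_Icc.mpr ⟨hp, le_refl p⟩)
  obtain ⟨junk, hjunk⟩ := bwd_circ_small (n := n) hp hpk
  apply cspot_eq' (l1 := ((p:ℕ) : ZMod (n+1)) :: (backwardCandidates k p).map Nat.cast)
    (l2 := junk ++ ((List.range n).map fun i => ((p:ℕ) : ZMod (n+1)) + ((i+1:ℕ) : ZMod (n+1))))
  · unfold circCands
    rw [hjunk]
    simp [List.append_assoc]
  · intro x hx
    rcases List.mem_cons.mp hx with rfl | hx
    · exact (mem_image_cast hocc hpn).mpr hmem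
    · obtain ⟨y, hy, rfl⟩ := List.mem_map.mp hx
      have hb := bwd_bounds hy
      exact (mem_image_cast hocc (by omega)).mpr
        (hblock (Finset.mem_Icc.mpr ⟨hb.1, by omega⟩))
  · exact zero_not_mem_image hocc

theorem cspot_eq_zero_of_none {n k : ℕ} {occ : Finset ℕ} {p : ℕ}
    (hocc : occ ⊆ Finset.Icc 1 n) (hp : 1 ≤ p) (hpn : p ≤ n)
    (hok : p ≤ k → ¬ Finset.Icc 1 p ⊆ occ)
    (hs : naplesSpot n k occ p = none) :
    cspot n k (occ.image Nat.cast) ((p : ℕ) : ZMod (n+1)) = 0 := by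
  unfold naplesSpot at hs
  by_cases hmem : p ∈ occ
  swap
  · rw [if_neg hmem] at hs; exact absurd hs (by simp)
  rw [if_pos hmem] at hs
  cases hfind : (backwardCandidates k p).find? (fun s => decide (s ∉ occ)) with
  | some t => rw [hfind] at hs; exact absurd hs (by simp)
  | none =>
      rw [hfind] at hs
      have hallbwd : ∀ x ∈ backwardCandidates k p, x ∈ occ := by
        intro x hx
        have := List.find?_eq_none.mp hfind x hx
        simpa using this
      have hpk : k < p := by
        by_contra hle
        push_neg at hle
        apply hok hle
        intro j hj
        have hj' := Finset.mem_Icc.mp hj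
        by_cases hjp : j = p
        · exact hjp ▸ hmem
        · exact hallbwd j (mem_bwd_small hle (by omega) (by omega))
      have hallfwd : ∀ x ∈ List.range' (p+1) (n-p), x ∈ occ := by
        intro x hx
        have hx' : x ∈ List.range' p (n+1-p) := by
          rw [fwd_lin hp hpn]; exact List.mem_cons_of_mem _ hx
        have := List.find?_eq_none.mp hs x hx'
        simpa using this
      obtain ⟨junk, hjunk⟩ := fwd_circ (n := n) hp hpn
      have hcirc := bwd_circ_big (n := n) (k := k) (p := p) hpk
      apply cspot_eq' (l1 := ((p:ℕ) : ZMod (n+1)) ::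
          ((backwardCandidates k p).map Nat.cast ++ (List.range' (p+1) (n-p)).map Nat.cast))
        (l2 := junk)
      · unfold circCands
        rw [hjunk, hcirc]
        simp [List.append_assoc]
      · intro x hx
        rcases List.mem_cons.mp hx with rfl | hx
        · exact (mem_image_cast hocc hpn).mpr hmem
        · rcases List.mem_append.mp hx with hx | hx
          · obtain ⟨y, hy, rfl⟩ := List.mem_map.mp hx
            have hb := bwd_bounds hy
            exact (mem_image_cast hocc (by omega)).mpr (hallbwd y hy)
          · obtain ⟨y, hy, rfl⟩ := List.mem_map.mp hx
            have hb := List.mem_range'_1.mp hy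
            exact (mem_image_cast hocc (by omega)).mpr (hallfwd y hy)
      · exact zero_not_mem_image hocc

theorem naplesSpot_bounds {n k : ℕ} {occ : Finset ℕ} {p s : ℕ}
    (hp : 1 ≤ p) (hpn : p ≤ n)
    (hs : naplesSpot n k occ p = some s) : 1 ≤ s ∧ s ≤ n := by
  unfold naplesSpot at hs
  by_cases hmem : p ∈ occ
  · rw [if_pos hmem] at hs
    cases hfind : (backwardCandidates k p).find? (fun s => decide (s ∉ occ)) with
    | some t =>
        rw [hfind] at hs
        obtain rfl : s = t := (Option.some.inj hs).symm
        have hmem' := List.mem_of_find?_eq_some hfind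
        have := bwd_bounds hmem'
        omega
    | none =>
        rw [hfind] at hs
        unfold forwardSpot at hs
        have hmem' := List.mem_of_find?_eq_some hs
        have := List.mem_range'_1.mp hmem'
        omega
  · rw [if_neg hmem] at hs
    obtain rfl : p = s := Option.some.inj hs
    omega

theorem containedAux_cons (n k p : ℕ) (rest : List ℕ) (occ : Finset ℕ) :
    naplesContainedAux n k (p :: rest) occ
      = ((decide (p ≤ k → ¬ Finset.Icc 1 p ⊆ occ)) &&
          (match naplesSpot n k occ p with
           | none => false
           | some s => naplesContainedAux n k rest (insert s occ))) := rfl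

theorem containedAux_cons_none {n k p : ℕ} {rest : List ℕ} {occ : Finset ℕ}
    (h : naplesSpot n k occ p = none) :
    naplesContainedAux n k (p :: rest) occ = false := by
  rw [containedAux_cons, h]
  exact Bool.and_false _

theorem containedAux_cons_some {n k p s : ℕ} {rest : List ℕ} {occ : Finset ℕ}
    (h : naplesSpot n k occ p = some s) :
    naplesContainedAux n k (p :: rest) occ
      = ((decide (p ≤ k → ¬ Finset.Icc 1 p ⊆ occ)) &&
          naplesContainedAux n k rest (insert s occ)) := by
  rw [containedAux_cons, h]

theorem main_correspondence {n k : ℕ} : ∀ (l : List ℕ) (occ : Finset ℕ),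
    occ ⊆ Finset.Icc 1 n → (∀ p ∈ l, 1 ≤ p ∧ p ≤ n) →
    (naplesContainedAux n k l occ = true ↔
      (0 : ZMod (n+1)) ∉ cpark n k (l.map Nat.cast) (occ.image Nat.cast)) := by
  intro l
  induction l with
  | nil =>
      intro occ hocc _
      simpa [naplesContainedAux, cpark] using zero_not_mem_image hocc
  | cons p rest ih =>
      intro occ hocc hvals
      have hp : 1 ≤ p := (hvals p (by simp)).1
      have hpn : p ≤ n := (hvals p (by simp)).2
      have hcpark : cpark n k ((p :: rest).map Nat.cast) (occ.image Nat.cast)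
          = cpark n k (rest.map Nat.cast)
              (insert (cspot n k (occ.image Nat.cast) ((p:ℕ) : ZMod (n+1))) (occ.image Nat.cast)) := rfl
      by_cases hblock : p ≤ k ∧ Finset.Icc 1 p ⊆ occ
      · have hLHS : naplesContainedAux n k (p :: rest) occ = false := by
          unfold naplesContainedAux
          simp [hblock.1, hblock.2]
        have hzero : cspot n k (occ.image Nat.cast) ((p:ℕ) : ZMod (n+1)) = 0 :=
          cspot_eq_zero_of_blocked hocc hp hpn hblock.1 hblock.2
        have h0 := cpark_mono (n := n) (k := k) (rest.map Nat.cast)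
          (insert 0 (occ.image Nat.cast)) (Finset.mem_insert_self 0 _)
        rw [hLHS, hcpark, hzero]
        simp [h0]
      · have hok : p ≤ k → ¬ Finset.Icc 1 p ⊆ occ := fun h1 h2 => hblock ⟨h1, h2⟩
        cases hs : naplesSpot n k occ p with
        | none =>
            have hLHS : naplesContainedAux n k (p :: rest) occ = false := by
              exact containedAux_cons_none hs
            have hzero := cspot_eq_zero_of_none hocc hp hpn hok hs
            have h0 := cpark_mono (n := n) (k := k) (rest.map Nat.cast)
              (insert 0 (occ.image Nat.cast)) (Finset.mem_insert_self 0 _)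
            rw [hLHS, hcpark, hzero]
            simp [h0]
        | some s =>
            have hsb := naplesSpot_bounds (k := k) hp hpn hs
            have hLHS : naplesContainedAux n k (p :: rest) occ
                = naplesContainedAux n k rest (insert s occ) := by
              rw [containedAux_cons_some hs]
              have hd : decide (p ≤ k → ¬ Finset.Icc 1 p ⊆ occ) = true := by
                simp only [decide_eq_true_eq]
                exact hok
              rw [hd, Bool.true_and]
            have hcast := cspot_eq_cast hocc hp hpn hok hs
            rw [hLHS, hcpark, hcast, ← Finset.image_insert]
            exact ih (insert s occ)
              (Finset.insert_subset (Finset.mem_Icc.mpr ⟨hsb.1, hsb.2⟩) hocc)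
              (fun q hq => hvals q (by simp [hq]))

end CN

namespace CN

theorem circCands_add {n k : ℕ} (p c : ZMod (n+1)) :
    circCands n k (p + c) = (circCands n k p).map (· + c) := by
  unfold circCands
  simp only [List.map_cons, List.map_append, List.map_map]
  refine congrArg₂ _ rfl (congrArg₂ _ ?_ ?_)
  · apply List.map_congr_left
    intro i _
    show p + c - ((i+1:ℕ) : ZMod (n+1)) = p - ((i+1:ℕ) : ZMod (n+1)) + c
    ring
  · apply List.map_congr_left
    intro i _
    show p + c + ((i+1:ℕ) : ZMod (n+1)) = p + ((i+1:ℕ) : ZMod (n+1)) + c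
    ring

theorem cspot_add {n k : ℕ} (occ : Finset (ZMod (n+1))) (p c : ZMod (n+1)) :
    cspot n k (occ.image (· + c)) (p + c) = cspot n k occ p + c := by
  unfold cspot
  rw [circCands_add, List.find?_map]
  have hpred : ((fun s => decide (s ∉ occ.image (· + c))) ∘ (· + c))
      = fun s => decide (s ∉ occ) := by
    funext s
    simp only [Function.comp_apply]
    apply decide_eq_decide.mpr
    constructor
    · intro h hs; exact h (Finset.mem_image_of_mem _ hs)
    · intro h hs
      obtain ⟨y, hy, hxy⟩ := Finset.mem_image.mp hs
      have : y = s := by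
        have := add_right_cancel hxy
        exact this
      exact h (this ▸ hy)
  rw [hpred]
  cases h : (circCands n k p).find? (fun s => decide (s ∉ occ)) <;> simp [h]

theorem cpark_add {n k : ℕ} : ∀ (l : List (ZMod (n+1))) (occ : Finset (ZMod (n+1)))
    (c : ZMod (n+1)),
    cpark n k (l.map (· + c)) (occ.image (· + c)) = (cpark n k l occ).image (· + c) := by
  intro l
  induction l with
  | nil => intro occ c; rfl
  | cons p rest ih =>
      intro occ c
      show cpark n k (rest.map (· + c))
          (insert (cspot n k (occ.image (· + c)) (p + c)) (occ.image (· + c)))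
        = ((cpark n k rest (insert (cspot n k occ p) occ)).image (· + c))
      rw [cspot_add]
      rw [show insert (cspot n k occ p + c) (occ.image (· + c))
          = (insert (cspot n k occ p) occ).image (· + c) from by rw [Finset.image_insert]]
      exact ih _ c

theorem cspot_not_mem {n k : ℕ} {occ : Finset (ZMod (n+1))} (h : occ ≠ Finset.univ)
    (p : ZMod (n+1)) : cspot n k occ p ∉ occ := by
  obtain ⟨s, hs⟩ : ∃ s, s ∉ occ := by
    by_contra hall
    push_neg at hall
    exact h (Finset.eq_univ_iff_forall.mpr hall)
  have hmem : s ∈ circCands n k p := by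
    by_cases hsp : s = p
    · exact hsp ▸ List.mem_cons_self
    · have hv : (s - p).val ≠ 0 := by
        intro h0
        exact hsp (by
          have : s - p = 0 := (ZMod.val_eq_zero _).mp h0
          have := sub_eq_zero.mp this
          exact this)
      refine List.mem_cons_of_mem _ (List.mem_append_right _
        (List.mem_map.mpr ⟨(s - p).val - 1, List.mem_range.mpr ?_, ?_⟩))
      · have := ZMod.val_lt (s - p)
        omega
      · have h1 : (s - p).val - 1 + 1 = (s - p).val := by omega
        rw [h1, ZMod.natCast_val, ZMod.cast_id]
        ring
  cases hfind : (circCands n k p).find? (fun s => decide (s ∉ occ)) with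
  | none =>
      exact absurd (by simpa using List.find?_eq_none.mp hfind s hmem) (by simpa using hs)
  | some t =>
      have := List.find?_some hfind
      unfold cspot
      rw [hfind]
      simpa using this

theorem cpark_card {n k : ℕ} : ∀ (l : List (ZMod (n+1))) (occ : Finset (ZMod (n+1))),
    occ.card + l.length ≤ n + 1 → (cpark n k l occ).card = occ.card + l.length := by
  intro l
  induction l with
  | nil => intro occ _; simp [cpark]
  | cons p rest ih =>
      intro occ hle
      simp only [List.length_cons] at hle
      have hne : occ ≠ Finset.univ := by
        intro h
        rw [h, Finset.card_univ, ZMod.card] at hle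
        omega
      have hnm := cspot_not_mem (n := n) (k := k) hne p
      show (cpark n k rest (insert (cspot n k occ p) occ)).card = _
      rw [ih _ (by rw [Finset.card_insert_of_notMem hnm]; omega),
        Finset.card_insert_of_notMem hnm]
      simp only [List.length_cons]
      omega

/-- Final occupied set of the circular process started empty. -/
def occF (n k : ℕ) (b : Fin n → ZMod (n+1)) : Finset (ZMod (n+1)) :=
  cpark n k (List.ofFn b) ∅

theorem occF_card {n k : ℕ} (b : Fin n → ZMod (n+1)) : (occF n k b).card = n := by
  unfold occF
  rw [cpark_card _ _ (by simp)]
  simp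

noncomputable def eSpot (n k : ℕ) (b : Fin n → ZMod (n+1)) : ZMod (n+1) :=
  if h : (Finset.univ \ occF n k b).Nonempty then h.choose else 0

theorem compl_nonempty {n k : ℕ} (b : Fin n → ZMod (n+1)) :
    (Finset.univ \ occF n k b).Nonempty := by
  apply Finset.card_pos.mp
  rw [Finset.card_sdiff_of_subset (Finset.subset_univ _), Finset.card_univ, ZMod.card, occF_card]
  omega

theorem eSpot_not_mem {n k : ℕ} (b : Fin n → ZMod (n+1)) : eSpot n k b ∉ occF n k b := by
  have hne := compl_nonempty (n := n) (k := k) b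
  rw [eSpot, dif_pos hne]
  have := hne.choose_spec
  exact (Finset.mem_sdiff.mp this).2

theorem compl_eq {n k : ℕ} (b : Fin n → ZMod (n+1)) :
    Finset.univ \ occF n k b = {eSpot n k b} := by
  have hcard : (Finset.univ \ occF n k b).card = 1 := by
    rw [Finset.card_sdiff_of_subset (Finset.subset_univ _), Finset.card_univ, ZMod.card, occF_card]
    omega
  obtain ⟨x, hx⟩ := Finset.card_eq_one.mp hcard
  have hmem : eSpot n k b ∈ Finset.univ \ occF n k b :=
    Finset.mem_sdiff.mpr ⟨Finset.mem_univ _, eSpot_not_mem b⟩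
  rw [hx] at hmem ⊢
  rw [Finset.mem_singleton.mp hmem]

theorem not_mem_iff_eSpot {n k : ℕ} {b : Fin n → ZMod (n+1)} {x : ZMod (n+1)} :
    x ∉ occF n k b ↔ x = eSpot n k b := by
  have h : x ∉ occF n k b ↔ x ∈ Finset.univ \ occF n k b := by
    simp [Finset.mem_sdiff]
  rw [h, compl_eq, Finset.mem_singleton]

theorem occF_add {n k : ℕ} (b : Fin n → ZMod (n+1)) (c : ZMod (n+1)) :
    occF n k (fun i => b i + c) = (occF n k b).image (· + c) := by
  unfold occF
  have h1 : List.ofFn (fun i => b i + c) = (List.ofFn b).map (· + c) := by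
    rw [List.map_ofFn]
    rfl
  have h2 := cpark_add (n := n) (k := k) (List.ofFn b) ∅ c
  rw [Finset.image_empty] at h2
  rw [h1, h2]

theorem eSpot_add {n k : ℕ} (b : Fin n → ZMod (n+1)) (c : ZMod (n+1)) :
    eSpot n k (fun i => b i + c) = eSpot n k b + c := by
  have h1 : eSpot n k b + c ∉ occF n k (fun i => b i + c) := by
    rw [occF_add]
    intro h
    obtain ⟨y, hy, hxy⟩ := Finset.mem_image.mp h
    have : y = eSpot n k b := add_right_cancel hxy
    exact eSpot_not_mem b (this ▸ hy)
  exact (not_mem_iff_eSpot.mp h1).symm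

theorem E_card_mul {n k : ℕ} (hn : 1 ≤ n) :
    ((Finset.univ.filter
      (fun b : Fin n → ZMod (n+1) => (0 : ZMod (n+1)) ∉ occF n k b)).card) * (n+1)
      = (n+1)^n := by
  classical
  set E := Finset.univ.filter
    (fun b : Fin n → ZMod (n+1) => (0 : ZMod (n+1)) ∉ occF n k b) with hE
  have hbij : (E ×ˢ (Finset.univ : Finset (ZMod (n+1)))).card
      = (Finset.univ : Finset (Fin n → ZMod (n+1))).card := by
    apply Finset.card_nbij'
      (i := fun (ac : (Fin n → ZMod (n+1)) × ZMod (n+1)) => fun i => ac.1 i + ac.2)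
      (j := fun b => (fun i => b i - eSpot n k b, eSpot n k b))
    · intro a _
      exact Finset.mem_univ _
    · intro b _
      refine Finset.mem_product.mpr ⟨?_, Finset.mem_univ _⟩
      rw [hE, Finset.mem_filter]
      refine ⟨Finset.mem_univ _, ?_⟩
      have : (fun i => b i - eSpot n k b) = (fun i => b i + (- eSpot n k b)) := by
        funext i; ring
      beta_reduce
      rw [this, occF_add]
      intro h
      obtain ⟨y, hy, hxy⟩ := Finset.mem_image.mp h
      have hy0 : y = eSpot n k b := by
        linear_combination hxy
      exact eSpot_not_mem b (hy0 ▸ hy)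
    · intro ac hac
      obtain ⟨ha, _⟩ := Finset.mem_product.mp hac
      rw [hE, Finset.mem_filter] at ha
      have he0 : eSpot n k ac.1 = 0 := (not_mem_iff_eSpot.mp ha.2).symm
      have heq : eSpot n k (fun i => ac.1 i + ac.2) = ac.2 := by
        rw [eSpot_add, he0, zero_add]
      refine Prod.ext ?_ ?_
      · funext i
        simp only [heq]
        ring
      · simpa using heq
    · intro b _
      funext i
      show b i - eSpot n k b + eSpot n k b = b i
      ring
  rw [Finset.card_product, Finset.card_univ, Finset.card_univ, ZMod.card,
    Fintype.card_fun] at hbij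
  rw [hbij, ZMod.card, Fintype.card_fin]

theorem zero_mem_cpark_of_mem {n k : ℕ} : ∀ (l : List (ZMod (n+1)))
    (occ : Finset (ZMod (n+1))), (0 : ZMod (n+1)) ∈ l →
    (0 : ZMod (n+1)) ∈ cpark n k l occ := by
  intro l
  induction l with
  | nil => intro occ h; simp at h
  | cons p rest ih =>
      intro occ h
      show (0 : ZMod (n+1)) ∈ cpark n k rest (insert (cspot n k occ p) occ)
      rcases List.mem_cons.mp h with rfl | h
      · by_cases h0 : (0 : ZMod (n+1)) ∈ occ
        · exact cpark_mono _ _ (Finset.mem_insert_of_mem h0)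
        · have : cspot n k occ 0 = 0 := by
            unfold cspot circCands
            rw [List.find?_cons_of_pos (by simpa using h0)]
            rfl
          rw [this]
          exact cpark_mono _ _ (Finset.mem_insert_self _ _)
      · exact ih _ h

end CN

namespace CN

theorem flatMap_pure {α β : Type} (f : α → β) : ∀ (l : List α),
    (l.flatMap fun a => [f a]) = l.map f := by
  intro l
  induction l with
  | nil => rfl
  | cons h t ih => simp [List.flatMap_cons, ih]

theorem prefList_eq {m n : ℕ} (a : Fin m → Fin n) :
    prefList a = List.ofFn (fun x => (a x : ℕ) + 1) := by
  simp only [prefList, List.pure_def, List.bind_eq_flatMap]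
  rw [flatMap_pure, List.map_map, List.map_ofFn]
  rfl

end CN

theorem contained_count (n k : ℕ) (hn : 1 ≤ n) (hk : k ≤ n - 1) :
    (Bset n n k).card = (n + 1) ^ (n - 1) := by
  classical
  have hEcard : (Bset n n k).card = (Finset.univ.filter
      (fun b : Fin n → ZMod (n+1) => (0 : ZMod (n+1)) ∉ CN.occF n k b)).card := by
    apply Finset.card_nbij'
      (i := fun (a : Fin n → Fin n) => fun x => (((a x : ℕ) + 1 : ℕ) : ZMod (n+1)))
      (j := fun (b : Fin n → ZMod (n+1)) =>
        fun x => (⟨(b x).val - 1, by have := ZMod.val_lt (b x); omega⟩ : Fin n))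
    · -- i maps Bset into E
      intro a ha
      rw [Finset.mem_coe, Bset, Finset.mem_filter] at ha
      have hcont := ha.2
      have hvals : ∀ p ∈ prefList a, 1 ≤ p ∧ p ≤ n := by
        intro p hp
        rw [CN.prefList_eq] at hp
        obtain ⟨i, rfl⟩ := List.mem_ofFn.mp hp
        have hlt := (a i).isLt
        constructor
        · show 1 ≤ (a i : ℕ) + 1
          omega
        · show (a i : ℕ) + 1 ≤ n
          omega
      have hmain := (CN.main_correspondence (n := n) (k := k) (prefList a) ∅
        (Finset.empty_subset _) hvals).mp hcont
      rw [Finset.image_empty] at hmain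
      have hlist : (prefList a).map (Nat.cast : ℕ → ZMod (n+1))
          = List.ofFn (fun x => (((a x : ℕ) + 1 : ℕ) : ZMod (n+1))) := by
        rw [CN.prefList_eq, List.map_ofFn]
        rfl
      rw [hlist] at hmain
      rw [Finset.mem_coe, Finset.mem_filter]
      exact ⟨Finset.mem_univ _, hmain⟩
    · -- j maps E into Bset
      intro b hb
      rw [Finset.mem_coe, Finset.mem_filter] at hb
      have hb0 := hb.2
      have hne : ∀ x, b x ≠ 0 := by
        intro x hx
        apply hb0
        apply CN.zero_mem_cpark_of_mem
        exact List.mem_ofFn.mpr ⟨x, hx⟩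
      have hval1 : ∀ x, 1 ≤ (b x).val := by
        intro x
        have h2 : (b x).val ≠ 0 := fun h => hne x ((ZMod.val_eq_zero _).mp h)
        omega
      have hlist : (prefList (fun x => (⟨(b x).val - 1,
            by have := ZMod.val_lt (b x); omega⟩ : Fin n))).map
          (Nat.cast : ℕ → ZMod (n+1)) = List.ofFn b := by
        rw [CN.prefList_eq, List.map_ofFn]
        refine congrArg List.ofFn (funext fun x => ?_)
        show ((((b x).val - 1) + 1 : ℕ) : ZMod (n+1)) = b x
        have h1 : (b x).val - 1 + 1 = (b x).val := by have := hval1 x; omega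
        rw [h1, ZMod.natCast_val, ZMod.cast_id]
      have hvals : ∀ p ∈ prefList (fun x => (⟨(b x).val - 1,
            by have := ZMod.val_lt (b x); omega⟩ : Fin n)),
          1 ≤ p ∧ p ≤ n := by
        intro p hp
        rw [CN.prefList_eq] at hp
        obtain ⟨i, rfl⟩ := List.mem_ofFn.mp hp
        refine ⟨?_, ?_⟩
        · show 1 ≤ ((b i).val - 1) + 1
          omega
        show ((b i).val - 1) + 1 ≤ n
        have h2 := ZMod.val_lt (b i)
        have h3 := hval1 i
        omega
      rw [Finset.mem_coe, Bset, Finset.mem_filter]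
      refine ⟨Finset.mem_univ _, ?_⟩
      apply (CN.main_correspondence (n := n) (k := k) _ ∅ (Finset.empty_subset _) hvals).mpr
      rw [Finset.image_empty, hlist]
      exact hb0
    · -- j ∘ i = id
      intro a _
      funext x
      apply Fin.ext
      show (((((a x : ℕ) + 1 : ℕ) : ZMod (n+1))).val) - 1 = (a x : ℕ)
      rw [ZMod.val_natCast_of_lt (by have := (a x).isLt; omega)]
      omega
    · -- i ∘ j = id
      intro b hb
      funext x
      show ((((b x).val - 1) + 1 : ℕ) : ZMod (n+1)) = b x
      have hne : b x ≠ 0 := by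
        intro hx
        apply (Finset.mem_filter.mp hb).2
        apply CN.zero_mem_cpark_of_mem
        exact List.mem_ofFn.mpr ⟨x, hx⟩
      have hval1 : 1 ≤ (b x).val := by
        have h2 : (b x).val ≠ 0 := fun h => hne ((ZMod.val_eq_zero _).mp h)
        omega
      have h1 : (b x).val - 1 + 1 = (b x).val := by omega
      rw [h1, ZMod.natCast_val, ZMod.cast_id]
  have hmul := CN.E_card_mul (n := n) (k := k) hn
  have hpow : (n + 1) ^ n = (n + 1) ^ (n - 1) * (n + 1) := by
    have h1 : (n + 1) ^ n = (n + 1) ^ ((n - 1) + 1) := by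
      rw [Nat.sub_add_cancel hn]
    rw [h1, pow_succ]
  rw [hEcard]
  exact Nat.eq_of_mul_eq_mul_right (by omega) (hmul.trans hpow)
end
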